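/- arXiv:0909.0340 — 5 statements merged into one kernel-verified Lean document; each statement's English description precedes it below -/
import Mathlib

section
/- Fix integers n ≥ 1 and m ≥ 0, and set r_{k,m} := 1/(2^k · k! · Π_{l=0}^{k−1}(n+2m−4−2l)) for 0 ≤ k ≤ ⌊m/2⌋ (assuming all factors n+2m−4−2l, 0 ≤ l ≤ 2⌊m/2⌋−2, are nonzero, which holds for n ≥ 1). Then the linear operator P_{harm,m} := Σ_{k=0}^{⌊m/2⌋} r_{k,m} r^{2k} Δ^k : A_m → A_m is the orthogonal projection of A_m onto Harm_m with respect to the differential pairing; equivalently, P_{harm,m}(h) = h for every h ∈ Harm_m and P_{harm,m}(r²f) = 0 for every f ∈ A_{m−2}. -/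
noncomputable section

open MvPolynomial MeasureTheory Finset
open scoped RealInnerProductSpace Manifold

namespace Heat

abbrev Poly (n : ℕ) := MvPolynomial (Fin n) ℝ
abbrev E (n : ℕ) := EuclideanSpace ℝ (Fin n)

variable (n : ℕ)

/-- The differential operator `∂^I` on polynomials. -/
def pdI (I : Fin n →₀ ℕ) : Poly n → Poly n :=
  (List.ofFn fun i : Fin n => (fun p : Poly n => (⇑(pderiv i))^[I i] p)).foldr (· ∘ ·) id

/-- The differential pairing `⟨g, f⟩ = (g(∂)f)(0)`. -/
def dPair (g f : Poly n) : ℝ :=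
  eval 0 (∑ I ∈ g.support, g.coeff I • pdI n I f)

/-- The Laplacian `Δ = -∑ ∂ᵢ²` as a linear map on polynomials. -/
def lap : Poly n →ₗ[ℝ] Poly n :=
  -∑ i : Fin n, ((pderiv i : Derivation ℝ (Poly n) (Poly n)).toLinearMap ∘ₗ
    (pderiv i : Derivation ℝ (Poly n) (Poly n)).toLinearMap)

/-- `r² = ∑ xᵢ²`. -/
def rsq : Poly n := ∑ i : Fin n, X i ^ 2

/-- Harmonic homogeneous polynomials of degree `m`. -/
def Harm (m : ℕ) : Submodule ℝ (Poly n) :=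
  homogeneousSubmodule (Fin n) ℝ m ⊓ LinearMap.ker (lap n)

/-- `B` is an orthonormal basis of the subspace `S` w.r.t. the differential pairing. -/
structure IsONBasis (S : Submodule ℝ (Poly n)) (B : Finset (Poly n)) : Prop where
  mem : ∀ h ∈ B, h ∈ S
  ortho : ∀ h ∈ B, ∀ g ∈ B, dPair n h g = if h = g then 1 else 0
  span : Submodule.span ℝ (B : Set (Poly n)) = S

/-- Evaluation of a polynomial at a point of Euclidean space. -/
def peval (f : Poly n) (x : E n) : ℝ := eval (fun i => x i) f

/-- `μ` is the rotation-invariant probability measure on the unit sphere `S^{n-1}`. -/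
structure IsSphereMeasure (μ : Measure (E n)) : Prop where
  prob : IsProbabilityMeasure μ
  supp : μ (Metric.sphere (0 : E n) 1)ᶜ = 0
  inv : ∀ φ : E n ≃ₗᵢ[ℝ] E n, Measure.map φ μ = μ

/-- The lattice spanned (over `ℤ`) by the vectors `b`. -/
def latticeOf (b : Fin n → E n) : Submodule ℤ (E n) := Submodule.span ℤ (Set.range b)

/-- An integral lattice: all square norms are integers. -/
def IsIntegral (L : Submodule ℤ (E n)) : Prop := ∀ v ∈ L, ∃ z : ℤ, ‖v‖ ^ 2 = (z : ℝ)

/-- The matrix `A` with `½A` the Gram matrix of the basis `b`. -/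
def evenGram (b : Fin n → E n) : Matrix (Fin n) (Fin n) ℝ :=
  Matrix.of fun i j => 2 * ⟪b i, b j⟫

/-- A real matrix has integer entries and even diagonal. -/
def IntEvenDiag (M : Matrix (Fin n) (Fin n) ℝ) : Prop :=
  (∀ i j, ∃ z : ℤ, M i j = (z : ℝ)) ∧ ∀ i, ∃ z : ℤ, M i i = 2 * (z : ℝ)

/-- `N` is the level of the lattice with basis `b`. -/
def IsLevel (b : Fin n → E n) (N : ℕ) : Prop :=
  0 < N ∧ IntEvenDiag n ((N : ℝ) • (evenGram n b)⁻¹) ∧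
    ∀ M : ℕ, 0 < M → IntEvenDiag n ((M : ℝ) • (evenGram n b)⁻¹) → N ≤ M

/-- The spherical theta function `Θ_{h,Λ}`. -/
def theta (h : Poly n) (L : Submodule ℤ (E n)) (τ : UpperHalfPlane) : ℂ :=
  ∑' v : L, (peval n h (v : E n) : ℂ) *
    Complex.exp (2 * (Real.pi : ℂ) * Complex.I * ((‖(v : E n)‖ ^ 2 : ℝ) : ℂ) * (τ : ℂ))

/-- The image of the lattice `L` under an isometry of Euclidean space. -/
def mapLat (φ : E n ≃ₗᵢ[ℝ] E n) (L : Submodule ℤ (E n)) : Submodule ℤ (E n) :=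
  L.map (φ.toLinearEquiv.toLinearMap.restrictScalars ℤ)

/-- The Kronecker symbol at 2, `(a/2)`. -/
def kronAtTwo (a : ℤ) : ℤ :=
  if a % 2 = 0 then 0 else if a % 8 = 1 ∨ a % 8 = 7 then 1 else -1

/-- The Kronecker symbol `(a/m)`. -/
def kronSym (a m : ℤ) : ℤ :=
  if m = 0 then (if a = 1 ∨ a = -1 then 1 else 0)
  else
    (if m < 0 ∧ a < 0 then -1 else 1) *
      kronAtTwo a ^ (m.natAbs.factorization 2) *
      jacobiSym a (m.natAbs / 2 ^ (m.natAbs.factorization 2))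

open UpperHalfPlane in
/-- `f` is a modular form of weight `w`, level `N` and character `χ`:  it is holomorphic
on the upper half plane, transforms under `Γ₀(N)` with automorphy factor `χ(d)(cτ+d)^w`,
and is bounded towards all cusps. -/
structure IsModularForm (N : ℕ) (w : ℝ) (χ : ℤ → ℤ) (f : UpperHalfPlane → ℂ) : Prop where
  holo : MDifferentiable 𝓘(ℂ) 𝓘(ℂ) f
  transf : ∀ γ : Matrix.SpecialLinearGroup (Fin 2) ℤ, γ ∈ CongruenceSubgroup.Gamma0 N →
    ∀ τ : UpperHalfPlane, f (γ • τ) =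
      ((χ ((γ : Matrix (Fin 2) (Fin 2) ℤ) 1 1) : ℝ) : ℂ) *
      (((((γ : Matrix (Fin 2) (Fin 2) ℤ) 1 0 : ℤ) : ℂ)) * (τ : ℂ) +
        (((γ : Matrix (Fin 2) (Fin 2) ℤ) 1 1 : ℤ) : ℂ)) ^ (w : ℂ) * f τ
  bdd : ∀ γ : Matrix.SpecialLinearGroup (Fin 2) ℤ,
    IsBoundedAtImInfty fun τ : UpperHalfPlane =>
      (((((γ : Matrix (Fin 2) (Fin 2) ℤ) 1 0 : ℤ) : ℂ)) * (τ : ℂ) +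
        (((γ : Matrix (Fin 2) (Fin 2) ℤ) 1 1 : ℤ) : ℂ)) ^ (-(w : ℂ)) * f (γ • τ)

/-- The trivial character. -/
def trivChar : ℤ → ℤ := fun _ => 1

open scoped Classical in
/-- The multiple theta series `Θ_{m₁,…,m_k,Λ}` attached to a family of bases `B i`. -/
def thetaMulti (k : ℕ) (B : Fin k → Finset (Poly n)) (L : Submodule ℤ (E n))
    (μ : Measure (E n)) (τ : UpperHalfPlane) : ℂ :=
  ∑ g ∈ Fintype.piFinset B,
    (∏ i, theta n (g i) L τ) * (((∫ x, ∏ i, peval n (g i) x ∂μ) : ℝ) : ℂ)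

/-- The polynomial `p_m` (evaluated at `c`). -/
def pmVal (m : ℕ) (c : ℝ) : ℝ :=
  ∑ k ∈ Finset.range (m + 1),
    (-1 : ℝ) ^ k * c ^ (2 * m - 2 * k) /
      ((Nat.factorial (2 * m - 2 * k) : ℝ) * (Nat.factorial k : ℝ) * 2 ^ k *
        ∏ l ∈ Finset.range k, ((n : ℝ) + 4 * m - 4 - 2 * l))

/-- The heat flux `f_Λ` of the lattice `L`. -/
def heatF (L : Submodule ℤ (E n)) (t : ℝ) (x : E n) : ℝ :=
  (4 * Real.pi * t) ^ (-(n : ℝ) / 2) * ∑' γ : L, Real.exp (-‖x - (γ : E n)‖ ^ 2 / (4 * t))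

/-- Partial derivative of a function on Euclidean space. -/
def pdFun (i : Fin n) (F : E n → ℝ) : E n → ℝ := fun x => fderiv ℝ F x (EuclideanSpace.single i 1)

/-- Iterated partial derivative `∂^I` of a function on Euclidean space. -/
def pdIFun (I : Fin n →₀ ℕ) : (E n → ℝ) → (E n → ℝ) :=
  (List.ofFn fun i : Fin n => (fun F : E n → ℝ => (pdFun n i)^[I i] F)).foldr (· ∘ ·) id

/-- The differential operator `g(∂)` applied to a smooth function. -/
def applyDiff (g : Poly n) (F : E n → ℝ) (x : E n) : ℝ :=
  ∑ I ∈ g.support, g.coeff I * pdIFun n I F x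

open scoped Classical in
/-- The degree `2m` homogeneous term of the Taylor expansion of `x ↦ f_Λ(t,x)` at `0`. -/
def taylorTerm (L : Submodule ℤ (E n)) (m : ℕ) (t : ℝ) : Poly n :=
  ∑ c ∈ (Fintype.piFinset fun _ : Fin n => Finset.range (2 * m + 1)).filter
      (fun c => ∑ i, c i = 2 * m),
    (pdIFun n (Finsupp.equivFunOnFinite.symm c) (heatF n L t) 0 /
      ∏ i, (Nat.factorial (c i) : ℝ)) • ∏ i, X i ^ c i

/-- `P` is the orthogonal projection of `A_m` onto `Harm_m` w.r.t. the differential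
pairing: on `A_m` it takes values in `Harm_m`, `f - P f` is orthogonal to `Harm_m`,
and it is the identity on `Harm_m`. -/
def IsHarmProj (m : ℕ) (P : Poly n → Poly n) : Prop :=
  (∀ f ∈ homogeneousSubmodule (Fin n) ℝ m, P f ∈ Harm n m ∧
    ∀ h ∈ Harm n m, dPair n h (f - P f) = 0) ∧
  ∀ h ∈ Harm n m, P h = h

/-- The `E₈` lattice as a subset of `ℝ⁸`. -/
def E8set : Set (E 8) :=
  {x | ((∀ i, ∃ z : ℤ, x i = (z : ℝ)) ∨ (∀ i, ∃ z : ℤ, x i = (z : ℝ) + 1 / 2)) ∧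
    ∃ z : ℤ, (∑ i, x i) = 2 * (z : ℝ)}

end Heat

namespace Heat

variable (n : ℕ)

/-- The operator `P_{harm,m} = ∑_{k=0}^{⌊m/2⌋} r_{k,m} · r^{2k} Δ^k` on polynomials. -/
def PharmOp (m : ℕ) : Poly n → Poly n := fun f =>
  ∑ k ∈ Finset.range (m / 2 + 1),
    (1 / ((2 : ℝ) ^ k * (Nat.factorial k : ℝ) *
      ∏ l ∈ Finset.range k, ((n : ℝ) + 2 * (m : ℝ) - 4 - 2 * (l : ℝ)))) •
      (rsq n ^ k * ((lap n ^ k) f))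

/-- The quantity `Ξ(u,v,w)`. -/
def Xi (u v w : E n) : ℝ :=
  2 * ‖u‖ ^ 2 * ‖v‖ ^ 2 * ‖w‖ ^ 2 -
    (n : ℝ) * (‖u‖ ^ 2 * ⟪v, w⟫ ^ 2 + ‖v‖ ^ 2 * ⟪u, w⟫ ^ 2 + ‖w‖ ^ 2 * ⟪u, v⟫ ^ 2) +
    (n : ℝ) ^ 2 * ⟪v, w⟫ * ⟪u, w⟫ * ⟪u, v⟫

/-- The `k`-th coefficient of the claimed q-expansion of `Θ_{m,m,Λ}`. -/
def mmCoeff (m : ℕ) (L : Submodule ℤ (E n)) (k : ℕ) : ℝ :=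
  ∑' p : {p : L × L // (p.1 : E n) ≠ 0 ∧ (p.2 : E n) ≠ 0 ∧
      ‖(p.1 : E n)‖ ^ 2 + ‖(p.2 : E n)‖ ^ 2 = (k : ℝ)},
    pmVal n m (⟪(p.1.1 : E n), (p.1.2 : E n)⟫ / (‖(p.1.1 : E n)‖ * ‖(p.1.2 : E n)‖)) *
      ‖(p.1.1 : E n)‖ ^ (2 * m) * ‖(p.1.2 : E n)‖ ^ (2 * m)

/-- The sum `∑ Ξ(u,v,w)` over lattice triples of total square norm `k`. -/
def tripleCoeff (L : Submodule ℤ (E n)) (k : ℕ) : ℝ :=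
  ∑' t : {t : L × L × L //
      ‖(t.1 : E n)‖ ^ 2 + ‖(t.2.1 : E n)‖ ^ 2 + ‖(t.2.2 : E n)‖ ^ 2 = (k : ℝ)},
    Xi n (t.1.1 : E n) (t.1.2.1 : E n) (t.1.2.2 : E n)

/-- The generalized binomial coefficient `C(z,k) = z(z-1)⋯(z-k+1)/k!`. -/
def genBinom (z : ℝ) (k : ℕ) : ℝ :=
  (∏ a ∈ Finset.range k, (z - (a : ℝ))) / (Nat.factorial k : ℝ)

open scoped Classical in
/-- The monomial orthonormal basis `{xᵢ²/√2} ∪ {xᵢxⱼ, i<j}` of `A₂`. -/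
def B2 : Finset (Poly n) :=
  (Finset.univ.image fun i : Fin n => (Real.sqrt 2)⁻¹ • (X i ^ 2 : Poly n)) ∪
  ((Finset.univ.filter fun p : Fin n × Fin n => p.1 < p.2).image
    fun p => (X p.1 * X p.2 : Poly n))

/-- The explicit harmonic projection in degree two, `P = id + (1/(2n)) r² Δ`. -/
def P2 : Poly n → Poly n := fun g => g + (1 / (2 * (n : ℝ))) • (rsq n * lap n g)

end Heat
namespace Heat



variable {n : ℕ}

-- ============ coefficient lemma for pderiv ============

variable {n : ℕ}

theorem coeff_pderiv (i : Fin n) (s : Fin n →₀ ℕ) (f : Poly n) :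
    coeff s (pderiv i f) = ((s i : ℝ) + 1) * coeff (s + Finsupp.single i 1) f := by
  induction f using MvPolynomial.induction_on' with
  | monomial t a =>
    rw [pderiv_monomial]
    rcases Nat.eq_zero_or_pos (t i) with h0 | hpos
    · rw [coeff_monomial, coeff_monomial]
      have : t ≠ s + Finsupp.single i 1 := by
        intro h
        apply absurd h0
        simp [h, Finsupp.add_apply, Finsupp.single_apply]
      simp [this, h0]
    · rw [coeff_monomial, coeff_monomial]
      by_cases h : t = s + Finsupp.single i 1
      · subst h
        have h2 : (s + Finsupp.single i 1) - Finsupp.single i 1 = s := by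
          ext j; by_cases hj : j = i <;> simp [Finsupp.single_apply, hj]
        rw [if_pos h2]
        have : (((s + Finsupp.single i 1 : Fin n →₀ ℕ) i : ℕ) : ℝ) = (s i : ℝ) + 1 := by
          simp
        rw [this]; simp only [if_true]; ring
      · have h2 : ¬ (t - Finsupp.single i 1 = s) := by
          intro h3
          apply h
          ext j
          have h4 := congrArg (fun u : Fin n →₀ ℕ => u j) h3
          simp only [Finsupp.tsub_apply, Finsupp.single_apply, Finsupp.add_apply] at h4 ⊢
          by_cases hj : i = j
          · subst hj; simp at h4 ⊢; omega
          · simp only [if_neg hj] at h4 ⊢; omega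
        simp [h, h2]
  | add p q hp hq =>
    simp [hp, hq]; ring


theorem coeff_pderiv_iterate (i : Fin n) (k : ℕ) (s : Fin n →₀ ℕ) (f : Poly n) :
    coeff s ((⇑(pderiv i))^[k] f)
      = (∏ t ∈ Finset.range k, ((s i : ℝ) + t + 1)) * coeff (s + Finsupp.single i k) f := by
  induction k generalizing f with
  | zero => simp
  | succ k ih =>
    rw [Function.iterate_succ_apply, ih, coeff_pderiv, Finset.prod_range_succ]
    have h1 : ((s + Finsupp.single i k : Fin n →₀ ℕ) i : ℝ) = (s i : ℝ) + k := by
      simp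
    have h2 : s + Finsupp.single i k + Finsupp.single i 1
        = s + Finsupp.single i (k + 1) := by
      rw [add_assoc, ← Finsupp.single_add]
    rw [h1, h2]; ring

theorem coeff_foldr (I : Fin n →₀ ℕ) (l : List (Fin n)) (hl : l.Nodup) (s : Fin n →₀ ℕ)
    (hs : ∀ i ∈ l, s i = 0) (f : Poly n) :
    coeff s ((l.map fun i => (⇑(pderiv i))^[I i]).foldr (· ∘ ·) id f)
      = (l.map fun i => (((I i).factorial : ℕ) : ℝ)).prod *
          coeff (s + (l.map fun i => Finsupp.single i (I i)).sum) f := by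
  induction l generalizing s with
  | nil => simp
  | cons a l ih =>
    have ha : s a = 0 := hs a List.mem_cons_self
    have hanotin : a ∉ l := (List.nodup_cons.mp hl).1
    simp only [List.map_cons, List.foldr_cons, Function.comp_apply]
    rw [coeff_pderiv_iterate]
    have hfac : (∏ t ∈ Finset.range (I a), ((s a : ℝ) + t + 1))
        = (((I a).factorial : ℕ) : ℝ) := by
      rw [ha]
      push_cast [← Finset.prod_range_add_one_eq_factorial]
      exact Finset.prod_congr rfl fun x _ => by ring
    rw [hfac, ih ((List.nodup_cons.mp hl).2) (s + Finsupp.single a (I a))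
      (fun i hi => by
        have : a ≠ i := fun h => hanotin (h ▸ hi)
        simp [hs i (List.mem_cons_of_mem a hi), Finsupp.single_apply, this])]
    rw [List.prod_cons, List.sum_cons]
    ring_nf
    rw [add_assoc]

theorem eval_zero_pdI (I : Fin n →₀ ℕ) (f : Poly n) :
    eval 0 (pdI n I f) = (∏ i, (((I i).factorial : ℕ) : ℝ)) * coeff I f := by
  have h1 : pdI n I f
      = ((List.ofFn (id : Fin n → Fin n)).map fun i => (⇑(pderiv i))^[I i]).foldr
          (· ∘ ·) id f := by
    rw [List.map_ofFn]; rfl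
  have h2 := coeff_foldr I (List.ofFn (id : Fin n → Fin n))
    (List.nodup_ofFn.mpr Function.injective_id) 0 (fun _ _ => rfl) f
  have h3 : ((List.ofFn (id : Fin n → Fin n)).map fun i => Finsupp.single i (I i)).sum = I := by
    rw [List.map_ofFn]
    rw [List.sum_ofFn]
    rw [show ((fun i => Finsupp.single i (I i)) ∘ id) = fun i => Finsupp.single i (I i) from rfl]
    rw [← Finsupp.sum_fintype _ _ (fun i => Finsupp.single_zero i)]
    exact Finsupp.sum_single I
  have h4 : ((List.ofFn (id : Fin n → Fin n)).map fun i => (((I i).factorial : ℕ) : ℝ)).prod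
      = ∏ i, (((I i).factorial : ℕ) : ℝ) := by
    rw [List.map_ofFn, List.prod_ofFn]; rfl
  rw [show (eval 0 (pdI n I f)) = coeff 0 (pdI n I f) from by
    rw [MvPolynomial.eval_zero]; rfl]
  rw [h1, h2, h3, h4, zero_add]


variable {n : ℕ}

theorem dPair_eq_sum (g f : Poly n) (S : Finset (Fin n →₀ ℕ)) (hS : g.support ⊆ S) :
    dPair n g f
      = ∑ I ∈ S, g.coeff I * ((∏ i, (((I i).factorial : ℕ) : ℝ)) * f.coeff I) := by
  unfold dPair
  rw [map_sum]
  rw [Finset.sum_subset hS (fun I _ hI => by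
    rw [MvPolynomial.notMem_support_iff] at hI
    simp [hI])]
  refine Finset.sum_congr rfl fun I _ => ?_
  rw [MvPolynomial.smul_eval, eval_zero_pdI]

theorem dPair_comm (g f : Poly n) : dPair n g f = dPair n f g := by
  rw [dPair_eq_sum g f (g.support ∪ f.support) Finset.subset_union_left,
    dPair_eq_sum f g (g.support ∪ f.support) Finset.subset_union_right]
  exact Finset.sum_congr rfl fun I _ => by ring

theorem dPair_add_right (g f₁ f₂ : Poly n) :
    dPair n g (f₁ + f₂) = dPair n g f₁ + dPair n g f₂ := by
  rw [dPair_eq_sum g _ g.support subset_rfl, dPair_eq_sum g f₁ g.support subset_rfl,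
    dPair_eq_sum g f₂ g.support subset_rfl, ← Finset.sum_add_distrib]
  exact Finset.sum_congr rfl fun I _ => by rw [MvPolynomial.coeff_add]; ring

theorem dPair_zero_right (g : Poly n) : dPair n g 0 = 0 := by
  rw [dPair_eq_sum g 0 g.support subset_rfl]
  simp

theorem dPair_sum_right {ι : Type*} (g : Poly n) (s : Finset ι) (f : ι → Poly n) :
    dPair n g (∑ i ∈ s, f i) = ∑ i ∈ s, dPair n g (f i) := by
  classical
  induction s using Finset.induction_on with
  | empty => simp [dPair_zero_right]
  | insert _ _ hi ih =>
    rw [Finset.sum_insert hi, Finset.sum_insert hi, dPair_add_right, ih]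

theorem prod_factorial_add_single (I : Fin n →₀ ℕ) (i : Fin n) :
    (∏ j, ((((I + Finsupp.single i 1 : Fin n →₀ ℕ) j).factorial : ℕ) : ℝ))
      = ((I i : ℝ) + 1) * ∏ j, (((I j).factorial : ℕ) : ℝ) := by
  rw [← Finset.mul_prod_erase Finset.univ _ (Finset.mem_univ i),
    ← Finset.mul_prod_erase Finset.univ (fun j => (((I j).factorial : ℕ) : ℝ))
      (Finset.mem_univ i)]
  have h1 : ((I + Finsupp.single i 1 : Fin n →₀ ℕ) i) = I i + 1 := by simp
  have h2 : ∀ j ∈ Finset.univ.erase i,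
      ((((I + Finsupp.single i 1 : Fin n →₀ ℕ) j).factorial : ℕ) : ℝ)
        = (((I j).factorial : ℕ) : ℝ) := by
    intro j hj
    have : j ≠ i := (Finset.mem_erase.mp hj).1
    simp [Finsupp.single_apply, (Ne.symm this)]
  rw [Finset.prod_congr rfl h2, h1, Nat.factorial_succ]
  push_cast
  ring

theorem dPair_X_mul (i : Fin n) (g f : Poly n) :
    dPair n (X i * g) f = dPair n g (pderiv i f) := by
  classical
  have hinj : Function.Injective (fun I : Fin n →₀ ℕ => I + Finsupp.single i 1) :=
    fun a b hab => by simpa using add_left_injective _ hab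
  have hsub : (X i * g).support ⊆ g.support.image (· + Finsupp.single i 1) := by
    intro J hJ
    rw [MvPolynomial.mem_support_iff, MvPolynomial.coeff_X_mul'] at hJ
    by_cases hi : i ∈ J.support
    · rw [if_pos hi] at hJ
      refine Finset.mem_image.mpr ⟨J - Finsupp.single i 1, MvPolynomial.mem_support_iff.mpr hJ, ?_⟩
      ext j
      simp only [Finsupp.add_apply, Finsupp.tsub_apply, Finsupp.single_apply]
      rcases eq_or_ne i j with rfl | hij
      · have : 1 ≤ J i := Nat.one_le_iff_ne_zero.mpr (Finsupp.mem_support_iff.mp hi)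
        simp only [if_pos rfl]
        simp
        omega
      · simp [hij]
    · rw [if_neg hi] at hJ
      exact absurd rfl hJ
  rw [dPair_eq_sum (X i * g) f _ hsub, Finset.sum_image (fun a _ b _ h => hinj h)]
  rw [dPair_eq_sum g (pderiv i f) g.support subset_rfl]
  refine Finset.sum_congr rfl fun I _ => ?_
  have hc : (X i * g).coeff (I + Finsupp.single i 1) = g.coeff I := by
    rw [add_comm, MvPolynomial.coeff_X_mul]
  rw [hc, prod_factorial_add_single, coeff_pderiv]
  ring

theorem dPair_rsq_mul (h q : Poly n) (hh : lap n h = 0) : dPair n h (rsq n * q) = 0 := by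
  have hsum : ∑ i : Fin n, pderiv i (pderiv i h) = 0 := by
    have := hh
    unfold lap at this
    simpa [neg_eq_zero] using this
  rw [dPair_comm]
  have h1 : rsq n * q = ∑ i : Fin n, X i * (X i * q) := by
    unfold rsq
    rw [Finset.sum_mul]
    exact Finset.sum_congr rfl fun i _ => by ring
  rw [h1]
  have h2 : dPair n (∑ i : Fin n, X i * (X i * q)) h
      = ∑ i : Fin n, dPair n (X i * (X i * q)) h := by
    rw [dPair_comm, dPair_sum_right]
    exact Finset.sum_congr rfl fun i _ => dPair_comm _ _
  rw [h2]
  have h3 : ∀ i : Fin n, dPair n (X i * (X i * q)) h = dPair n q (pderiv i (pderiv i h)) := by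
    intro i
    rw [dPair_X_mul, dPair_X_mul]
  rw [Finset.sum_congr rfl fun i _ => h3 i, ← dPair_sum_right, hsum, dPair_zero_right]


variable {n : ℕ}

theorem degree_eq_sum_univ (s : Fin n →₀ ℕ) : Finsupp.degree s = ∑ i, s i :=
  Finset.sum_subset (Finset.subset_univ _)
    (fun i _ hi => Finsupp.notMem_support_iff.mp hi)

theorem isHomogeneous_iff_coeff (f : Poly n) (d : ℕ) :
    f.IsHomogeneous d ↔ ∀ s : Fin n →₀ ℕ, coeff s f ≠ 0 → ∑ i, s i = d := by
  constructor
  · intro hf s hs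
    have := hf hs
    rw [← degree_eq_sum_univ]
    rw [Finsupp.degree_eq_weight_one]
    exact this
  · intro h s hs
    have := h s hs
    rw [← degree_eq_sum_univ] at this
    rw [Finsupp.degree_eq_weight_one] at this
    exact this

theorem pderiv_isHom {f : Poly n} {d : ℕ} (hf : f.IsHomogeneous d) (i : Fin n) :
    (pderiv i f).IsHomogeneous (d - 1) := by
  rw [isHomogeneous_iff_coeff] at hf ⊢
  intro s hs
  rw [coeff_pderiv] at hs
  have h2 : coeff (s + Finsupp.single i 1) f ≠ 0 := by
    intro h; rw [h, mul_zero] at hs; exact hs rfl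
  have h3 := hf _ h2
  have h4 : ∑ j, (s + Finsupp.single i 1 : Fin n →₀ ℕ) j = (∑ j, s j) + 1 := by
    simp only [Finsupp.add_apply, Finset.sum_add_distrib]
    congr 1
    rw [Finset.sum_eq_single i (fun j _ hj => Finsupp.single_eq_of_ne' (Ne.symm hj))
      (fun h => absurd (Finset.mem_univ i) h)]
    exact Finsupp.single_eq_same
  omega

theorem lap_apply (f : Poly n) : lap n f = -∑ i, pderiv i (pderiv i f) := by
  unfold lap
  simp

theorem lap_isHom {f : Poly n} {d : ℕ} (hf : f.IsHomogeneous d) :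
    (lap n f).IsHomogeneous (d - 2) := by
  rw [lap_apply]
  apply MvPolynomial.IsHomogeneous.neg
  apply MvPolynomial.IsHomogeneous.sum
  intro i _
  have := pderiv_isHom (pderiv_isHom hf i) i
  rwa [Nat.sub_sub] at this

theorem pderiv_eq_zero_of_isHomogeneous_zero {f : Poly n} (hf : f.IsHomogeneous 0) (i : Fin n) :
    pderiv i f = 0 := by
  rw [MvPolynomial.eq_zero_iff]
  intro s
  rw [coeff_pderiv]
  have : coeff (s + Finsupp.single i 1) f = 0 := by
    by_contra hc
    have := (isHomogeneous_iff_coeff f 0).mp hf _ hc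
    have hi : (s + Finsupp.single i 1 : Fin n →₀ ℕ) i ≠ 0 := by simp
    have : (s + Finsupp.single i 1 : Fin n →₀ ℕ) i = 0 :=
      (Finset.sum_eq_zero_iff).mp this i (Finset.mem_univ i)
    exact hi this
  rw [this, mul_zero]

theorem lap_eq_zero_of_le_one {f : Poly n} {d : ℕ} (hf : f.IsHomogeneous d) (hd : d ≤ 1) :
    lap n f = 0 := by
  rw [lap_apply, neg_eq_zero]
  apply Finset.sum_eq_zero
  intro i _
  have h1 : (pderiv i f).IsHomogeneous 0 := by
    have := pderiv_isHom hf i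
    rwa [Nat.sub_eq_zero_of_le hd] at this
  rw [pderiv_eq_zero_of_isHomogeneous_zero h1 i]


variable {n : ℕ}

theorem euler {f : Poly n} {d : ℕ} (hf : f.IsHomogeneous d) :
    ∑ i, X i * pderiv i f = ((d : ℝ)) • f := by
  classical
  apply MvPolynomial.ext
  intro s
  rw [MvPolynomial.coeff_sum, MvPolynomial.coeff_smul]
  have hterm : ∀ i : Fin n, coeff s (X i * pderiv i f) = (s i : ℝ) * coeff s f := by
    intro i
    rw [MvPolynomial.coeff_X_mul']
    by_cases hi : i ∈ s.support
    · rw [if_pos hi, coeff_pderiv]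
      have hge : 1 ≤ s i := Nat.one_le_iff_ne_zero.mpr (Finsupp.mem_support_iff.mp hi)
      have h2 : s - Finsupp.single i 1 + Finsupp.single i 1 = s := by
        ext j
        simp only [Finsupp.add_apply, Finsupp.tsub_apply, Finsupp.single_apply]
        rcases eq_or_ne i j with rfl | hij
        · simp; omega
        · simp [hij]
      have h1 : ((s - Finsupp.single i 1 : Fin n →₀ ℕ) i : ℝ) + 1 = (s i : ℝ) := by
        rw [Finsupp.tsub_apply]
        have : (s i - Finsupp.single i 1 i) = s i - 1 := by simp
        rw [this]
        have : ((s i - 1 : ℕ) : ℝ) = (s i : ℝ) - 1 := by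
          push_cast [Nat.cast_sub hge]; ring
        rw [this]; ring
      rw [h2, h1]
    · rw [if_neg hi]
      have : s i = 0 := Finsupp.notMem_support_iff.mp hi
      rw [this]; simp
  rw [Finset.sum_congr rfl (fun i _ => hterm i), ← Finset.sum_mul]
  rcases eq_or_ne (coeff s f) 0 with h | h
  · simp [h]
  · have hd := (isHomogeneous_iff_coeff f d).mp hf s h
    rw [smul_eq_mul, ← hd]
    push_cast
    ring

theorem pderiv_rsq (i : Fin n) : pderiv i (rsq n) = 2 * X i := by
  classical
  unfold rsq
  rw [map_sum]
  rw [Finset.sum_eq_single i (fun j _ hj => by simp [pderiv_pow, hj]) (by simp)]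
  simp [pderiv_pow]

theorem rsq_isHom : (rsq n).IsHomogeneous 2 := by
  unfold rsq
  apply MvPolynomial.IsHomogeneous.sum
  intro i _
  simpa using (isHomogeneous_X ℝ i).pow 2

theorem lap_rsq_single {g : Poly n} {d : ℕ} (hg : g.IsHomogeneous d) :
    lap n (rsq n * g) = rsq n * lap n g - ((2 * (n : ℝ) + 4 * (d : ℝ))) • g := by
  have hstep : ∀ i : Fin n, pderiv i (pderiv i (rsq n * g))
      = 2 * g + 4 * (X i * pderiv i g) + rsq n * pderiv i (pderiv i g) := by
    intro i
    simp only [pderiv_mul, pderiv_rsq, map_add]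
    have hp2 : pderiv i (2 : Poly n) = 0 := by
      have : ((2:Poly n)) = C (2:ℝ) := (map_ofNat C 2).symm
      rw [this, pderiv_C]
    simp [pderiv_mul, hp2]
    ring
  rw [lap_apply, lap_apply]
  rw [Finset.sum_congr rfl (fun i _ => hstep i)]
  rw [Finset.sum_add_distrib, Finset.sum_add_distrib, Finset.sum_const,
    ← Finset.mul_sum, euler hg]
  rw [Finset.card_univ, Fintype.card_fin]
  rw [nsmul_eq_mul]
  rw [MvPolynomial.smul_eq_C_mul, MvPolynomial.smul_eq_C_mul]
  have hn : ((n : ℕ) : Poly n) = C ((n : ℕ) : ℝ) := by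
    simp
  rw [hn]
  rw [map_add, map_mul, map_mul]
  have h2 : (C (2:ℝ) : Poly n) = 2 := map_ofNat C 2
  have h4 : (C (4:ℝ) : Poly n) = 4 := map_ofNat C 4
  rw [h2, h4, ← Finset.mul_sum]
  ring


variable {n : ℕ}

theorem lap_rsq_pow {g : Poly n} {d : ℕ} (hg : g.IsHomogeneous d) (k : ℕ) :
    lap n (rsq n ^ (k + 1) * g)
      = rsq n ^ (k + 1) * lap n g
        - (2 * ((k : ℝ) + 1) * (2 * (d : ℝ) + (n : ℝ) + 2 * (k : ℝ))) •
            (rsq n ^ k * g) := by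
  induction k with
  | zero =>
    rw [pow_one, pow_zero, one_mul, lap_rsq_single hg]
    congr 1
    · congr 1
      push_cast
      ring
  | succ k ih =>
    have hpow : (rsq n ^ (k + 1) * g).IsHomogeneous (2 * (k + 1) + d) := by
      have h1 : (rsq n ^ (k + 1) : Poly n).IsHomogeneous (2 * (k + 1)) := by
        simpa [mul_comm] using (rsq_isHom (n := n)).pow (k + 1)
      exact h1.mul hg
    have hss := lap_rsq_single hpow
    have h3 : rsq n ^ (k + 1 + 1) * g = rsq n * (rsq n ^ (k + 1) * g) := by ring
    rw [h3, hss, ih]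
    rw [mul_sub]
    have h4 : rsq n * (rsq n ^ (k + 1) * lap n g) = rsq n ^ (k + 1 + 1) * lap n g := by ring
    have h5 : rsq n * ((2 * ((k : ℝ) + 1) * (2 * (d : ℝ) + (n : ℝ) + 2 * (k : ℝ))) •
        (rsq n ^ k * g)) = (2 * ((k : ℝ) + 1) * (2 * (d : ℝ) + (n : ℝ) + 2 * (k : ℝ))) •
        (rsq n ^ (k + 1) * g) := by
      rw [mul_smul_comm]
      congr 1
      ring
    rw [h4, h5, sub_sub, ← add_smul]
    congr 1
    congr 1
    push_cast
    ring

theorem lap_pow_isHom {f : Poly n} {m : ℕ} (hf : f.IsHomogeneous m) (k : ℕ) :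
    ((lap n ^ k) f).IsHomogeneous (m - 2 * k) := by
  induction k with
  | zero => simpa using hf
  | succ k ih =>
    have h1 : (lap n ^ (k + 1)) f = lap n ((lap n ^ k) f) := by
      rw [pow_succ']
      rfl
    rw [h1]
    have := lap_isHom ih
    rwa [Nat.sub_sub, show 2 * k + 2 = 2 * (k + 1) by ring] at this

theorem lap_pow_eq_zero {f : Poly n} {m : ℕ} (hf : f.IsHomogeneous m) {k : ℕ}
    (hk : m < 2 * k) : (lap n ^ k) f = 0 := by
  induction k with
  | zero => omega
  | succ k ih =>
    have h1 : (lap n ^ (k + 1)) f = lap n ((lap n ^ k) f) := by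
      rw [pow_succ']; rfl
    rcases Nat.lt_or_ge m (2 * k) with h | h
    · rw [h1, ih h, map_zero]
    · rw [h1]
      exact lap_eq_zero_of_le_one (lap_pow_isHom hf k) (by omega)

theorem lap_pow_ne_zero_le {f : Poly n} {m : ℕ} (hf : f.IsHomogeneous m) {k : ℕ}
    (h : (lap n ^ k) f ≠ 0) : 2 * k ≤ m := by
  by_contra hc
  exact h (lap_pow_eq_zero hf (by omega))


variable {n : ℕ}

/-- The coefficient `r_{k,m}`. -/
def rkc (n m k : ℕ) : ℝ :=
  1 / ((2 : ℝ) ^ k * (Nat.factorial k : ℝ) *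
    ∏ l ∈ Finset.range k, ((n : ℝ) + 2 * (m : ℝ) - 4 - 2 * (l : ℝ)))

theorem PharmOp_eq (m : ℕ) (f : Poly n) :
    PharmOp n m f = ∑ k ∈ Finset.range (m / 2 + 1),
      rkc n m k • (rsq n ^ k * ((lap n ^ k) f)) := rfl

theorem rkc_zero (m : ℕ) : rkc n m 0 = 1 := by simp [rkc]

theorem fact_pos {m l k : ℕ} (hn : 1 ≤ n) (hl : l < k) (hk : k ≤ m / 2) :
    (0 : ℝ) < (n : ℝ) + 2 * (m : ℝ) - 4 - 2 * (l : ℝ) := by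
  have h1 : 2 * l + 2 ≤ m := by omega
  have h2 : (2 * (l : ℝ)) + 2 ≤ (m : ℝ) := by exact_mod_cast h1
  have h3 : (1 : ℝ) ≤ (n : ℝ) := by exact_mod_cast hn
  linarith

theorem prod_pos {m k : ℕ} (hn : 1 ≤ n) (hk : k ≤ m / 2) :
    (0 : ℝ) < ∏ l ∈ Finset.range k, ((n : ℝ) + 2 * (m : ℝ) - 4 - 2 * (l : ℝ)) :=
  Finset.prod_pos fun l hl => fact_pos hn (Finset.mem_range.mp hl) hk

theorem rkc_pos {m k : ℕ} (hn : 1 ≤ n) (hk : k ≤ m / 2) : 0 < rkc n m k := by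
  unfold rkc
  have hp := prod_pos (m := m) (k := k) hn hk
  have hfk : (0 : ℝ) < (Nat.factorial k : ℝ) := by exact_mod_cast (Nat.factorial_pos k)
  positivity

theorem rkc_succ {m k : ℕ} (hn : 1 ≤ n) (hk : k + 1 ≤ m / 2) :
    rkc n m k = rkc n m (k + 1) *
      (2 * ((k : ℝ) + 1) * ((n : ℝ) + 2 * (m : ℝ) - 4 - 2 * (k : ℝ))) := by
  have hp : (0 : ℝ) < ∏ l ∈ Finset.range k, ((n : ℝ) + 2 * (m : ℝ) - 4 - 2 * (l : ℝ)) :=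
    prod_pos hn (by omega)
  have hf : (0 : ℝ) < (n : ℝ) + 2 * (m : ℝ) - 4 - 2 * (k : ℝ) :=
    fact_pos hn (Nat.lt_succ_self k) hk
  have hfk : (0 : ℝ) < (Nat.factorial k : ℝ) := by exact_mod_cast (Nat.factorial_pos k)
  have h2 : (0 : ℝ) < (2 : ℝ) ^ k := by positivity
  unfold rkc
  rw [Finset.prod_range_succ, pow_succ, Nat.factorial_succ]
  push_cast
  field_simp


variable {n : ℕ}

theorem mem_Harm_iff {m : ℕ} {h : Poly n} :
    h ∈ Harm n m ↔ h.IsHomogeneous m ∧ lap n h = 0 := by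
  unfold Harm
  rw [Submodule.mem_inf, LinearMap.mem_ker, mem_homogeneousSubmodule]

theorem lap_pow_succ_apply (k : ℕ) (f : Poly n) :
    (lap n ^ (k + 1)) f = lap n ((lap n ^ k) f) := by
  rw [pow_succ']; rfl

theorem PharmOp_isHom {m : ℕ} {f : Poly n} (hf : f.IsHomogeneous m) :
    (PharmOp n m f).IsHomogeneous m := by
  rw [PharmOp_eq, ← mem_homogeneousSubmodule]
  apply Submodule.sum_mem
  intro k _
  apply Submodule.smul_mem
  rcases eq_or_ne ((lap n ^ k) f) 0 with h0 | h0
  · rw [h0, mul_zero]; exact Submodule.zero_mem _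
  · have h2k : 2 * k ≤ m := lap_pow_ne_zero_le hf h0
    have hr : (rsq n ^ k : Poly n).IsHomogeneous (2 * k) := by
      simpa [mul_comm] using (rsq_isHom (n := n)).pow k
    have := hr.mul (lap_pow_isHom hf k)
    rwa [show 2 * k + (m - 2 * k) = m by omega, ← mem_homogeneousSubmodule] at this

theorem lap_PharmOp {m : ℕ} (hn : 1 ≤ n) {f : Poly n} (hf : f.IsHomogeneous m) :
    lap n (PharmOp n m f) = 0 := by
  set K := m / 2 with hK
  set g : ℕ → Poly n := fun k => (lap n ^ k) f with hg
  set T : ℕ → Poly n := fun k => rkc n m k • (rsq n ^ k * g (k + 1)) with hT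
  have hTK : T K = 0 := by
    have : g (K + 1) = 0 := lap_pow_eq_zero hf (by omega)
    rw [hT]; simp [this]
  rw [PharmOp_eq, map_sum]
  have hterm0 : lap n (rkc n m 0 • (rsq n ^ 0 * g 0)) = T 0 := by
    rw [_root_.map_smul, pow_zero, one_mul, hT]
    simp only [pow_zero, one_mul]
    rfl
  have hterm : ∀ k, k < K →
      lap n (rkc n m (k + 1) • (rsq n ^ (k + 1) * g (k + 1))) = T (k + 1) - T k := by
    intro k hk
    rw [_root_.map_smul]
    rcases eq_or_ne (g (k + 1)) 0 with h0 | h0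
    · have h1 : g (k + 2) = 0 := by
        rw [hg]
        show (lap n ^ (k + 1 + 1)) f = 0
        rw [lap_pow_succ_apply]
        rw [show (lap n ^ (k+1)) f = g (k+1) from rfl, h0, map_zero]
      rw [h0]
      simp only [mul_zero, smul_zero, map_zero]
      rw [hT]
      simp only []
      rw [show g (k + 1 + 1) = g (k + 2) from rfl, h1, h0]
      simp
    · have h2k : 2 * (k + 1) ≤ m := lap_pow_ne_zero_le hf h0
      have hhom : (g (k + 1)).IsHomogeneous (m - 2 * (k + 1)) := lap_pow_isHom hf (k + 1)
      have hcast : ((m - 2 * (k + 1) : ℕ) : ℝ) = (m : ℝ) - 2 * (k : ℝ) - 2 := by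
        push_cast [Nat.cast_sub h2k]
        ring
      have hlr := lap_rsq_pow hhom k
      rw [hcast] at hlr
      have hglap : lap n (g (k + 1)) = g (k + 2) :=
        (lap_pow_succ_apply (k + 1) f).symm
      rw [hlr, hglap, smul_sub, smul_smul]
      have hc : rkc n m (k + 1) *
          (2 * ((k : ℝ) + 1) * (2 * ((m : ℝ) - 2 * (k : ℝ) - 2) + (n : ℝ) + 2 * (k : ℝ)))
          = rkc n m k := by
        linear_combination (2 * ((k : ℝ) + 1) *
          (2 * ((m : ℝ) - 2 * (k : ℝ) - 2) + (n : ℝ) + 2 * (k : ℝ))) * (0:ℝ) -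
          rkc_succ (n := n) hn (show k + 1 ≤ m / 2 by omega)
      rw [hc]
  rw [Finset.sum_range_succ']
  rw [hterm0, Finset.sum_congr rfl (fun k hk => hterm k (Finset.mem_range.mp hk)),
    Finset.sum_range_sub, hTK]
  simp

theorem PharmOp_mem_Harm {m : ℕ} (hn : 1 ≤ n) {f : Poly n} (hf : f.IsHomogeneous m) :
    PharmOp n m f ∈ Harm n m :=
  mem_Harm_iff.mpr ⟨PharmOp_isHom hf, lap_PharmOp hn hf⟩

theorem PharmOp_id {m : ℕ} {h : Poly n} (hh : h ∈ Harm n m) : PharmOp n m h = h := by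
  obtain ⟨hhom, hlap⟩ := mem_Harm_iff.mp hh
  rw [PharmOp_eq]
  rw [Finset.sum_eq_single 0]
  · rw [rkc_zero, pow_zero, one_smul, one_mul, pow_zero]
    rfl
  · intro k _ hk
    obtain ⟨j, rfl⟩ := Nat.exists_eq_succ_of_ne_zero hk
    have hps : (lap n ^ (j + 1)) h = (lap n ^ j) (lap n h) := by rw [pow_succ]; rfl
    rw [hps, hlap, map_zero, mul_zero, smul_zero]
  · intro hmem
    exact absurd (Finset.mem_range.mpr (by omega)) hmem


variable {n : ℕ}

theorem lap_pow_rsq_mul {m j : ℕ} (hjm : j + 2 = m) {f : Poly n} (hf : f.IsHomogeneous j)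
    (k : ℕ) :
    (lap n ^ (k + 1)) (rsq n * f)
      = rsq n * ((lap n ^ (k + 1)) f)
        - (2 * ((k : ℝ) + 1) * ((n : ℝ) + 2 * (m : ℝ) - 2 - 2 * ((k : ℝ) + 1))) •
            ((lap n ^ k) f) := by
  have hjr : (j : ℝ) = (m : ℝ) - 2 := by
    have : ((j + 2 : ℕ) : ℝ) = (m : ℝ) := by rw [hjm]
    push_cast at this
    linarith
  induction k with
  | zero =>
    simp only [zero_add, pow_one, Nat.cast_zero]
    rw [lap_rsq_single hf]
    have h0 : (lap n ^ 0) f = f := rfl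
    rw [h0]
    congr 1
    congr 1
    rw [hjr]
    push_cast
    ring
  | succ k ih =>
    rw [lap_pow_succ_apply (k + 1) (rsq n * f), ih, map_sub, _root_.map_smul,
      ← lap_pow_succ_apply k f]
    rcases eq_or_ne ((lap n ^ (k + 1)) f) 0 with h0 | h0
    · have h1 : (lap n ^ (k + 2)) f = 0 := by
        rw [lap_pow_succ_apply (k + 1) f, h0, map_zero]
      rw [h0, mul_zero, map_zero]
      rw [show (lap n ^ (k + 1 + 1)) f = (lap n ^ (k + 2)) f from rfl, h1]
      simp
    · have h2k : 2 * (k + 1) ≤ j := lap_pow_ne_zero_le hf h0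
      have hhom := lap_pow_isHom hf (k + 1)
      have hss := lap_rsq_single hhom
      have hcast : ((j - 2 * (k + 1) : ℕ) : ℝ) = (m : ℝ) - 2 * (k : ℝ) - 4 := by
        push_cast [Nat.cast_sub h2k]
        rw [hjr]
        ring
      rw [hcast] at hss
      rw [hss, ← lap_pow_succ_apply (k + 1) f]
      rw [sub_sub, ← add_smul]
      rw [show (lap n ^ (k + 1 + 1)) f = (lap n ^ (k + 2)) f from rfl]
      congr 1
      push_cast
      ring
  done

theorem PharmOp_rsq_mul {m j : ℕ} (hn : 1 ≤ n) (hjm : j + 2 = m) {f : Poly n}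
    (hf : f.IsHomogeneous j) : PharmOp n m (rsq n * f) = 0 := by
  set K := m / 2 with hK
  set S : ℕ → Poly n := fun k => rkc n m k • (rsq n ^ (k + 1) * ((lap n ^ k) f)) with hS
  have hSK : S K = 0 := by
    have h : (lap n ^ K) f = 0 := lap_pow_eq_zero hf (by omega)
    rw [hS]
    simp [h]
  rw [PharmOp_eq, Finset.sum_range_succ']
  have h0 : rkc n m 0 • (rsq n ^ 0 * ((lap n ^ 0) (rsq n * f))) = S 0 := by
    rw [hS]
    simp only [pow_zero, one_mul, pow_one, zero_add, Module.End.one_apply]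
  have hterm : ∀ k, k < K →
      rkc n m (k + 1) • (rsq n ^ (k + 1) * ((lap n ^ (k + 1)) (rsq n * f)))
        = S (k + 1) - S k := by
    intro k hk
    rw [lap_pow_rsq_mul hjm hf k, mul_sub, mul_smul_comm, smul_sub, smul_smul]
    have hc : rkc n m (k + 1) *
        (2 * ((k : ℝ) + 1) * ((n : ℝ) + 2 * (m : ℝ) - 2 - 2 * ((k : ℝ) + 1)))
        = rkc n m k := by
      linear_combination - rkc_succ (n := n) hn (show k + 1 ≤ m / 2 by omega)
    have hpow : rsq n ^ (k + 1) * (rsq n * ((lap n ^ (k + 1)) f))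
        = rsq n ^ (k + 1 + 1) * ((lap n ^ (k + 1)) f) := by ring
    rw [hc, hpow]
  rw [h0, Finset.sum_congr rfl (fun k hk => hterm k (Finset.mem_range.mp hk)),
    Finset.sum_range_sub, hSK]
  simp

theorem sub_PharmOp {m : ℕ} {f : Poly n} :
    ∃ q : Poly n, f - PharmOp n m f = rsq n * q := by
  refine ⟨-∑ k ∈ Finset.range (m / 2), rkc n m (k + 1) •
    (rsq n ^ k * ((lap n ^ (k + 1)) f)), ?_⟩
  rw [PharmOp_eq, Finset.sum_range_succ']
  have h0 : rkc n m 0 • (rsq n ^ 0 * ((lap n ^ 0) f)) = f := by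
    rw [rkc_zero, one_smul, pow_zero, one_mul]
    exact Module.End.one_apply f
  rw [h0, mul_neg, Finset.mul_sum]
  have hterm : ∀ k, rsq n * (rkc n m (k + 1) • (rsq n ^ k * ((lap n ^ (k + 1)) f)))
      = rkc n m (k + 1) • (rsq n ^ (k + 1) * ((lap n ^ (k + 1)) f)) := by
    intro k
    rw [mul_smul_comm]
    congr 1
    ring
  rw [Finset.sum_congr rfl (fun k _ => hterm k)]
  abel


/-- the operator `P_{harm,m} = ∑ r_{k,m} r^{2k} Δ^k` is the orthogonal
projection of `A_m` onto `Harm_m`: it is the identity on harmonic polynomials and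
kills `r² A_{m-2}`. -/
theorem statement2 (n m : ℕ) (hn : 1 ≤ n) :
    IsHarmProj n m (PharmOp n m) ∧
    (∀ h ∈ Harm n m, PharmOp n m h = h) ∧
    ∀ j : ℕ, j + 2 = m → ∀ f ∈ homogeneousSubmodule (Fin n) ℝ j,
      PharmOp n m (rsq n * f) = 0 := by
  refine ⟨⟨?_, ?_⟩, ?_, ?_⟩
  · intro f hf
    have hf' : f.IsHomogeneous m := (mem_homogeneousSubmodule m f).mp hf
    refine ⟨PharmOp_mem_Harm hn hf', ?_⟩
    intro h hh
    obtain ⟨q, hq⟩ := sub_PharmOp (m := m) (f := f)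
    rw [hq]
    exact dPair_rsq_mul h q (mem_Harm_iff.mp hh).2
  · exact fun h hh => PharmOp_id hh
  · exact fun h hh => PharmOp_id hh
  · intro j hj f hf
    exact PharmOp_rsq_mul hn hj ((mem_homogeneousSubmodule j f).mp hf)

end Heat
end
end

section
/- Let n ≥ 1 and m ≥ 1 be integers and let v, w ∈ ℝⁿ satisfy ‖v‖² ∈ ℤ, ‖w‖² ∈ ℤ and ⟨v,w⟩ ∈ ½ℤ. Then δ_m(v,w) := Σ_{k=0}^m (−1)^k · ((2m)!/((2m−2k)!·k!)) · 2^{2m−k} · ⟨v,w⟩^{2m−2k} · ‖v‖^{2k}‖w‖^{2k} · Π_{l=k}^{m−1}(n+4m−4−2l) is an integer; moreover, if v and w are nonzero then δ_m(v,w) = (2m)! · 2^{2m} · Π_{l=0}^{m−1}(n+4m−4−2l) · p_m(⟨v,w⟩/(‖v‖‖w‖)) · ‖v‖^{2m}‖w‖^{2m}. -/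
noncomputable section

open MvPolynomial MeasureTheory Finset
open scoped RealInnerProductSpace Manifold

namespace Heat

private lemma fact_ratio (m k : ℕ) (hk : k ≤ m) :
    ((Nat.factorial (2 * m) : ℝ)) =
      (((2 * m).choose (2 * k) * (2 * k).choose k * Nat.factorial k : ℕ) : ℝ) *
        ((Nat.factorial (2 * m - 2 * k) : ℝ) * (Nat.factorial k : ℝ)) := by
  have h2k : 2 * k ≤ 2 * m := by omega
  have h1 : (2 * m).choose (2 * k) * (2 * k).factorial * (2 * m - 2 * k).factorial
      = (2 * m).factorial := Nat.choose_mul_factorial_mul_factorial h2k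
  have h2 : (2 * k).choose k * k.factorial * (2 * k - k).factorial
      = (2 * k).factorial := Nat.choose_mul_factorial_mul_factorial (by omega)
  have h3 : 2 * k - k = k := by omega
  rw [h3] at h2
  have : ((2 * m).choose (2 * k) * (2 * k).choose k * Nat.factorial k) *
      ((2 * m - 2 * k).factorial * k.factorial) = (2 * m).factorial := by
    calc ((2 * m).choose (2 * k) * (2 * k).choose k * Nat.factorial k) *
        ((2 * m - 2 * k).factorial * k.factorial)
        = (2 * m).choose (2 * k) * ((2 * k).choose k * k.factorial * k.factorial) *
          (2 * m - 2 * k).factorial := by ring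
      _ = (2 * m).choose (2 * k) * (2 * k).factorial * (2 * m - 2 * k).factorial := by
          rw [h2]
      _ = (2 * m).factorial := h1
  exact_mod_cast this.symm

/-- `δ_m(v,w)` is an integer, and for nonzero `v, w` it equals
`(2m)! 2^{2m} ∏_{l=0}^{m-1}(n+4m-4-2l) · p_m(cos∠(v,w)) ‖v‖^{2m}‖w‖^{2m}`. -/
theorem statement7 (n m : ℕ) (hn : 1 ≤ n) (hm : 1 ≤ m)
    (v w : E n)
    (hv : ∃ a : ℤ, ‖v‖ ^ 2 = (a : ℝ)) (hw : ∃ a : ℤ, ‖w‖ ^ 2 = (a : ℝ))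
    (hvw : ∃ a : ℤ, ⟪v, w⟫ = (a : ℝ) / 2) :
    (∃ z : ℤ,
      ∑ k ∈ Finset.range (m + 1), (-1 : ℝ) ^ k *
        ((Nat.factorial (2 * m) : ℝ) /
          ((Nat.factorial (2 * m - 2 * k) : ℝ) * (Nat.factorial k : ℝ))) *
        2 ^ (2 * m - k) * ⟪v, w⟫ ^ (2 * m - 2 * k) * ‖v‖ ^ (2 * k) * ‖w‖ ^ (2 * k) *
        ∏ l ∈ Finset.Ico k m, ((n : ℝ) + 4 * (m : ℝ) - 4 - 2 * (l : ℝ)) = (z : ℝ)) ∧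
    (v ≠ 0 → w ≠ 0 →
      ∑ k ∈ Finset.range (m + 1), (-1 : ℝ) ^ k *
        ((Nat.factorial (2 * m) : ℝ) /
          ((Nat.factorial (2 * m - 2 * k) : ℝ) * (Nat.factorial k : ℝ))) *
        2 ^ (2 * m - k) * ⟪v, w⟫ ^ (2 * m - 2 * k) * ‖v‖ ^ (2 * k) * ‖w‖ ^ (2 * k) *
        ∏ l ∈ Finset.Ico k m, ((n : ℝ) + 4 * (m : ℝ) - 4 - 2 * (l : ℝ))
      = (Nat.factorial (2 * m) : ℝ) * 2 ^ (2 * m) *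
        (∏ l ∈ Finset.range m, ((n : ℝ) + 4 * (m : ℝ) - 4 - 2 * (l : ℝ))) *
        pmVal n m (⟪v, w⟫ / (‖v‖ * ‖w‖)) * ‖v‖ ^ (2 * m) * ‖w‖ ^ (2 * m)) := by
  obtain ⟨a, ha⟩ := hv
  obtain ⟨b, hb⟩ := hw
  obtain ⟨c, hc⟩ := hvw
  constructor
  · -- integrality
    refine ⟨∑ k ∈ Finset.range (m + 1),
      (-1 : ℤ) ^ k * (((2 * m).choose (2 * k) * (2 * k).choose k * Nat.factorial k : ℕ) : ℤ) *
        2 ^ k * c ^ (2 * m - 2 * k) * a ^ k * b ^ k *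
        ∏ l ∈ Finset.Ico k m, ((n : ℤ) + 4 * (m : ℤ) - 4 - 2 * (l : ℤ)), ?_⟩
    push_cast
    refine Finset.sum_congr rfl fun k hk => ?_
    have hk' : k ≤ m := by simpa using Nat.lt_succ_iff.mp (Finset.mem_range.mp hk)
    have hVa : ‖v‖ ^ (2 * k) = (a : ℝ) ^ k := by rw [pow_mul, ha]
    have hWb : ‖w‖ ^ (2 * k) = (b : ℝ) ^ k := by rw [pow_mul, hb]
    have h2 : (2 : ℝ) ^ (2 * m - k) = 2 ^ (2 * m - 2 * k) * 2 ^ k := by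
      rw [← pow_add]; congr 1; omega
    have hip : ⟪v, w⟫ ^ (2 * m - 2 * k) = (c : ℝ) ^ (2 * m - 2 * k) / 2 ^ (2 * m - 2 * k) := by
      rw [hc, div_pow]
    rw [hVa, hWb, h2, hip, fact_ratio m k hk']
    have h0 : ((Nat.factorial (2 * m - 2 * k) : ℝ)) ≠ 0 := Nat.cast_ne_zero.mpr
      (Nat.factorial_ne_zero _)
    have h1 : ((Nat.factorial k : ℝ)) ≠ 0 := Nat.cast_ne_zero.mpr (Nat.factorial_ne_zero _)
    field_simp
    push_cast; ring
  · -- the identity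
    intro hv0 hw0
    have hV : ‖v‖ ≠ 0 := norm_ne_zero_iff.mpr hv0
    have hW : ‖w‖ ≠ 0 := norm_ne_zero_iff.mpr hw0
    rw [pmVal]
    rw [Finset.mul_sum, Finset.sum_mul, Finset.sum_mul]
    refine Finset.sum_congr rfl fun k hk => ?_
    have hk' : k ≤ m := by simpa using Nat.lt_succ_iff.mp (Finset.mem_range.mp hk)
    have hPk : ∀ l ∈ Finset.range k, ((n : ℝ) + 4 * (m : ℝ) - 4 - 2 * (l : ℝ)) ≠ 0 := by
      intro l hl
      have hl' : l < k := Finset.mem_range.mp hl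
      have : (l : ℝ) ≤ (m : ℝ) - 1 := by
        have : l + 1 ≤ m := by omega
        have := (Nat.cast_le (α := ℝ)).mpr this
        push_cast at this; linarith
      have hn' : (1 : ℝ) ≤ (n : ℝ) := by exact_mod_cast hn
      have hm' : (1 : ℝ) ≤ (m : ℝ) := by exact_mod_cast hm
      nlinarith
    have hPkne : (∏ l ∈ Finset.range k, ((n : ℝ) + 4 * (m : ℝ) - 4 - 2 * (l : ℝ))) ≠ 0 :=
      Finset.prod_ne_zero_iff.mpr hPk
    have hsplit : (∏ l ∈ Finset.range m, ((n : ℝ) + 4 * (m : ℝ) - 4 - 2 * (l : ℝ)))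
        = (∏ l ∈ Finset.range k, ((n : ℝ) + 4 * (m : ℝ) - 4 - 2 * (l : ℝ))) *
          ∏ l ∈ Finset.Ico k m, ((n : ℝ) + 4 * (m : ℝ) - 4 - 2 * (l : ℝ)) := by
      rw [Finset.range_eq_Ico, ← Finset.prod_Ico_consecutive _ (Nat.zero_le k) hk', Finset.range_eq_Ico]
    have hVm : ‖v‖ ^ (2 * m) = ‖v‖ ^ (2 * m - 2 * k) * ‖v‖ ^ (2 * k) := by
      rw [← pow_add]; congr 1; omega
    have hWm : ‖w‖ ^ (2 * m) = ‖w‖ ^ (2 * m - 2 * k) * ‖w‖ ^ (2 * k) := by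
      rw [← pow_add]; congr 1; omega
    have h2m : (2 : ℝ) ^ (2 * m) = 2 ^ (2 * m - k) * 2 ^ k := by
      rw [← pow_add]; congr 1; omega
    have h0 : ((Nat.factorial (2 * m - 2 * k) : ℝ)) ≠ 0 := Nat.cast_ne_zero.mpr
      (Nat.factorial_ne_zero _)
    have h1 : ((Nat.factorial k : ℝ)) ≠ 0 := Nat.cast_ne_zero.mpr (Nat.factorial_ne_zero _)
    rw [hsplit, hVm, hWm, h2m, div_pow, mul_pow]
    field_simp

end Heat
end
end

section
/- For every real number w and every integer r ≥ 1, Σ_{p=0}^r (−1)^{r−p} · (w+2p−2r) · C(w, r−p) · C(w+p−2r−1, p) = 0; and for r = 0 the sum equals w. Here C(z,k) := (Π_{a=0}^{k−1}(z−a))/k! is the generalized binomial coefficient for real z and nonnegative integer k. -/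
noncomputable section

open MvPolynomial MeasureTheory Finset
open scoped RealInnerProductSpace Manifold

namespace Heat
lemma descPochhammer_smeval_prod (z : ℝ) : ∀ k : ℕ,
    (descPochhammer ℤ k).smeval z = ∏ a ∈ Finset.range k, (z - (a : ℝ))
  | 0 => by simp [descPochhammer_zero, Polynomial.smeval_one]
  | (k+1) => by
    rw [descPochhammer_succ_right, Polynomial.smeval_mul,
      descPochhammer_smeval_prod z k, Finset.prod_range_succ]
    congr 1
    rw [Polynomial.smeval_sub, Polynomial.smeval_X, Polynomial.smeval_natCast]
    simp

lemma genBinom_eq_choose (z : ℝ) (k : ℕ) : genBinom z k = Ring.choose z k := by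
  have h := Ring.descPochhammer_eq_factorial_smul_choose z k
  rw [descPochhammer_smeval_prod] at h
  rw [genBinom, h, nsmul_eq_mul]
  exact mul_div_cancel_left₀ _ (Nat.cast_ne_zero.mpr (Nat.factorial_ne_zero k))

lemma genBinom_vander (a b : ℝ) (r : ℕ) :
    ∑ q ∈ Finset.range (r+1), genBinom a q * genBinom b (r - q) = genBinom (a+b) r := by
  simp only [genBinom_eq_choose]
  rw [Ring.add_choose_eq r (Commute.all a b),
    Finset.Nat.sum_antidiagonal_eq_sum_range_succ_mk]

lemma genBinom_natCast (n k : ℕ) : genBinom (n : ℝ) k = n.choose k := by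
  rw [genBinom_eq_choose, Ring.choose_natCast]

lemma genBinom_reflect (z : ℝ) (k : ℕ) :
    genBinom z k = (-1 : ℝ)^k * genBinom ((k : ℝ) - 1 - z) k := by
  have key : ∏ a ∈ Finset.range k, ((k:ℝ) - 1 - z - a)
      = (-1:ℝ)^k * ∏ a ∈ Finset.range k, (z - a) := by
    rw [← Finset.prod_range_reflect (fun a : ℕ => (k:ℝ) - 1 - z - (a:ℝ)) k]
    have e : ∀ j ∈ Finset.range k, (k:ℝ) - 1 - z - ((k - 1 - j : ℕ):ℝ) = (-1) * (z - j) := by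
      intro j hj
      have hn : k - 1 - j + j + 1 = k := by
        have := Finset.mem_range.mp hj; omega
      have h2 : ((k - 1 - j : ℕ) : ℝ) + (j:ℝ) + 1 = (k:ℝ) := by
        exact_mod_cast congrArg (Nat.cast (R := ℝ)) hn
      have h1 : ((k - 1 - j : ℕ) : ℝ) = (k:ℝ) - 1 - (j:ℝ) := by linarith
      rw [h1]; ring
    rw [Finset.prod_congr rfl e, Finset.prod_mul_distrib, Finset.prod_const, Finset.card_range]
  have h1 : ((-1:ℝ))^k * ((-1:ℝ))^k = 1 := by
    rw [← pow_add, ← two_mul, pow_mul]; norm_num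
  rw [genBinom, genBinom, key, mul_div_assoc, ← mul_assoc, h1, one_mul]



noncomputable def gprev (w : ℝ) (q : ℕ) : ℝ :=
  match q with
  | 0 => 0
  | (t+1) => genBinom (w - 1) t

lemma genBinom_absorb1 (w : ℝ) (q : ℕ) :
    (w - (q:ℝ)) * genBinom w q = w * genBinom (w - 1) q := by
  have h2 := Finset.prod_range_succ' (fun a : ℕ => w - (a:ℝ)) q
  rw [Finset.prod_range_succ] at h2
  have e : ∀ a ∈ Finset.range q, w - (((a+1:ℕ)):ℝ) = w - 1 - a := by
    intro a _; push_cast; ring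
  rw [Finset.prod_congr rfl e] at h2
  rw [genBinom, genBinom, mul_div_assoc', mul_div_assoc']
  congr 1
  rw [mul_comm, h2]
  push_cast; ring

lemma genBinom_absorb2 (w : ℝ) (t : ℕ) :
    ((t:ℝ) + 1) * genBinom w (t+1) = w * genBinom (w - 1) t := by
  have h2 := Finset.prod_range_succ' (fun a : ℕ => w - (a:ℝ)) t
  have e : ∀ a ∈ Finset.range t, w - (((a+1:ℕ)):ℝ) = w - 1 - a := by
    intro a _; push_cast; ring
  rw [Finset.prod_congr rfl e] at h2
  have hf : ((Nat.factorial t : ℕ) : ℝ) ≠ 0 := Nat.cast_ne_zero.mpr (Nat.factorial_ne_zero t)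
  have hq : ((t:ℝ) + 1) ≠ 0 := by positivity
  rw [genBinom, genBinom, h2, Nat.factorial_succ]
  push_cast
  field_simp
  ring

lemma absorb_comb (w : ℝ) (q : ℕ) :
    (w - 2*(q:ℝ)) * genBinom w q = w * genBinom (w-1) q - w * gprev w q := by
  cases q with
  | zero => simp [genBinom, gprev]
  | succ t =>
    have h1 := genBinom_absorb1 w (t+1)
    have h2 := genBinom_absorb2 w t
    simp only [gprev]
    push_cast at h1 ⊢
    linear_combination h1 - h2

lemma term_eq (w : ℝ) (r q : ℕ) (hq : q ≤ r) :
    (-1 : ℝ) ^ (r - (r - q)) * (w + 2 * ((r - q : ℕ) : ℝ) - 2 * (r : ℝ)) *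
      genBinom w (r - (r - q)) * genBinom (w + ((r - q : ℕ) : ℝ) - 2 * (r : ℝ) - 1) (r - q)
    = (-1:ℝ)^r * (w * (genBinom (w-1) q * genBinom (2*(r:ℝ) - w) (r - q))
        - w * (gprev w q * genBinom (2*(r:ℝ) - w) (r - q))) := by
  have h1 : r - (r - q) = q := by omega
  have hc : ((r - q : ℕ):ℝ) = (r:ℝ) - (q:ℝ) := by
    rw [Nat.cast_sub hq]
  rw [h1, hc, genBinom_reflect (w + ((r:ℝ) - (q:ℝ)) - 2*(r:ℝ) - 1) (r-q),
    show (((r-q:ℕ):ℝ) - 1 - (w + ((r:ℝ)-(q:ℝ)) - 2*(r:ℝ) - 1)) = 2*(r:ℝ) - w from by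
      rw [hc]; ring]
  have hs : (-1:ℝ)^q * (-1:ℝ)^(r-q) = (-1:ℝ)^r := by
    rw [← pow_add]; congr 1; omega
  have hc2 := absorb_comb w q
  linear_combination ((-1:ℝ)^q * (-1:ℝ)^(r-q) * genBinom (2*(r:ℝ)-w) (r-q)) * hc2 +
    (w * genBinom (w-1) q * genBinom (2*(r:ℝ)-w) (r-q)
      - w * gprev w q * genBinom (2*(r:ℝ)-w) (r-q)) * hs


/-- `∑_{p=0}^r (-1)^{r-p} (w+2p-2r) C(w,r-p) C(w+p-2r-1,p)` equals `w`
for `r = 0` and `0` for `r ≥ 1`. -/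
theorem statement13 (w : ℝ) (r : ℕ) :
    ∑ p ∈ Finset.range (r + 1),
      (-1 : ℝ) ^ (r - p) * (w + 2 * (p : ℝ) - 2 * (r : ℝ)) *
        genBinom w (r - p) * genBinom (w + (p : ℝ) - 2 * (r : ℝ) - 1) p =
    if r = 0 then w else 0 := by
  rcases r with _ | s
  · norm_num [genBinom]
  · rw [if_neg (Nat.succ_ne_zero s)]
    rw [← Finset.sum_range_reflect]
    simp only [Nat.add_sub_cancel]
    rw [Finset.sum_congr rfl fun q hq =>
      term_eq w (s+1) q (Nat.lt_succ_iff.mp (Finset.mem_range.mp hq))]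
    rw [← Finset.mul_sum, Finset.sum_sub_distrib, ← Finset.mul_sum, ← Finset.mul_sum]
    have hX : ∑ q ∈ Finset.range (s+1+1),
        genBinom (w-1) q * genBinom (2*((s+1:ℕ):ℝ) - w) (s+1-q)
        = genBinom ((2*s+1:ℕ):ℝ) (s+1) := by
      rw [genBinom_vander]
      congr 1
      push_cast; ring
    have hY : ∑ q ∈ Finset.range (s+1+1),
        gprev w q * genBinom (2*((s+1:ℕ):ℝ) - w) (s+1-q)
        = genBinom ((2*s+1:ℕ):ℝ) s := by
      rw [Finset.sum_range_succ']
      simp only [gprev, Nat.succ_sub_succ, zero_mul, add_zero]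
      rw [genBinom_vander (w-1) (2*((s+1:ℕ):ℝ) - w) s]
      congr 1
      push_cast; ring
    rw [hX, hY, genBinom_natCast, genBinom_natCast, Nat.choose_symm_half]
    ring


end Heat
end
end

section
/- Let d ≥ 1 and m ≥ 0 be integers and let n be a real number such that n+2m−4−2j ≠ 0 for all integers 0 ≤ j ≤ 2d−2. Define r_{k,m} := 1/( 2^k · k! · Π_{l=0}^{k−1}(n+2m−4−2l) ). Then Σ_{k=0}^{d} ( Π_{l=k}^{d−1} 1/( (2l−2d)(n−2+2m−2d−2l) ) ) · r_{k,m} = 0. -/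
noncomputable section

open MvPolynomial MeasureTheory Finset
open scoped RealInnerProductSpace Manifold

namespace Heat

open Polynomial in
private lemma taylorLC (r : ℝ) (q : Polynomial ℝ) :
    (Polynomial.taylor r q).leadingCoeff = q.leadingCoeff := by
  rw [taylor_apply, leadingCoeff_comp (by simp [natDegree_X_add_C])]
  simp [(monic_X_add_C r).leadingCoeff]


open Polynomial in
private lemma taylorNe (q : Polynomial ℝ) (hq0 : q ≠ 0) : Polynomial.taylor 1 q ≠ 0 := by
  intro h
  apply hq0
  have := congrArg (Polynomial.taylor (-1)) h
  simpa [taylor_taylor] using this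


open Polynomial in
private lemma altsum : ∀ (d : ℕ) (q : Polynomial ℝ), q.degree < (d : ℕ) →
    ∑ k ∈ range (d + 1), (-1 : ℝ) ^ k * (d.choose k : ℝ) * q.eval (k : ℝ) = 0 := by
  intro d
  induction d with
  | zero =>
    intro q hq
    have hq0 : q = 0 := degree_eq_bot.mp (Nat.WithBot.lt_zero_iff.mp (by simpa using hq))
    simp [hq0]
  | succ d ih =>
    intro q hq
    by_cases hq0 : q = 0
    · simp [hq0]
    set q' : Polynomial ℝ := Polynomial.taylor 1 q - q with hq'
    have hdeg : q'.degree < (d : ℕ) := by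
      have h1 : (Polynomial.taylor 1 q).degree = q.degree := by
        rw [degree_eq_natDegree (taylorNe q hq0), degree_eq_natDegree hq0, natDegree_taylor]
      have h2 : q'.degree < q.degree := h1 ▸ degree_sub_lt h1 (taylorNe q hq0) (taylorLC 1 q)
      have h3 : q.degree ≤ (d : ℕ) := by
        rw [degree_eq_natDegree hq0] at hq ⊢
        exact_mod_cast Nat.lt_succ_iff.mp (by exact_mod_cast hq)
      exact lt_of_lt_of_le h2 h3
    have step : ∑ k ∈ range (d + 1 + 1), (-1 : ℝ) ^ k * ((d+1).choose k : ℝ) * q.eval (k : ℝ)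
        = -∑ k ∈ range (d + 1), (-1 : ℝ) ^ k * (d.choose k : ℝ) * q'.eval (k : ℝ) := by
      have e1 : ∑ k ∈ range (d + 1 + 1), (-1 : ℝ) ^ k * ((d+1).choose k : ℝ) * q.eval (k : ℝ)
          = (∑ i ∈ range (d+1), ((-1 : ℝ) ^ (i+1) * (d.choose i : ℝ) * q.eval ((i:ℝ)+1)
              + (-1 : ℝ) ^ (i+1) * (d.choose (i+1) : ℝ) * q.eval (((i+1 : ℕ)) : ℝ)))
            + (-1 : ℝ) ^ 0 * ((d+1).choose 0 : ℝ) * q.eval ((0 : ℕ) : ℝ) := by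
        rw [Finset.sum_range_succ' (fun k => (-1 : ℝ) ^ k * ((d+1).choose k : ℝ) * q.eval (k : ℝ)) (d+1)]
        congr 1
        refine Finset.sum_congr rfl fun i _ => ?_
        rw [Nat.choose_succ_succ]
        push_cast
        ring
      have e2 : (∑ i ∈ range (d+1), (-1 : ℝ) ^ (i+1) * (d.choose (i+1) : ℝ) * q.eval (((i+1:ℕ)) : ℝ))
            + (-1 : ℝ) ^ 0 * ((d+1).choose 0 : ℝ) * q.eval ((0 : ℕ) : ℝ)
          = ∑ k ∈ range (d + 1), (-1 : ℝ) ^ k * (d.choose k : ℝ) * q.eval (k : ℝ) := by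
        rw [show ((-1 : ℝ) ^ 0 * ((d+1).choose 0 : ℝ) * q.eval ((0 : ℕ) : ℝ))
            = (-1 : ℝ) ^ 0 * (d.choose 0 : ℝ) * q.eval ((0 : ℕ) : ℝ) by simp,
          ← Finset.sum_range_succ' (fun k => (-1 : ℝ) ^ k * (d.choose k : ℝ) * q.eval (k : ℝ)) (d+1),
          Finset.sum_range_succ]
        simp
      rw [e1, Finset.sum_add_distrib, add_assoc, e2, ← Finset.sum_neg_distrib]
      rw [← Finset.sum_add_distrib]
      refine Finset.sum_congr rfl fun i _ => ?_
      have : q'.eval (i : ℝ) = q.eval ((i : ℝ) + 1) - q.eval (i : ℝ) := by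
        simp [hq', taylor_eval]
      rw [this]
      ring
    rw [step, ih q' hdeg, neg_zero]


open Polynomial in
private lemma prodDescNat (m : ℕ) : ∏ i ∈ range m, (m - i) = m.factorial := by
  rw [← Finset.prod_range_reflect]
  refine (Finset.prod_congr rfl fun j hj => ?_).trans (Finset.prod_range_add_one_eq_factorial m)
  simp only [Finset.mem_range] at hj
  omega


open Polynomial in
private lemma prodIcoLin (k d : ℕ) (hk : k ≤ d) :
    ∏ l ∈ Finset.Ico k d, (2 * (l : ℝ) - 2 * (d : ℝ))
      = (-1 : ℝ) ^ (d - k) * 2 ^ (d - k) * ((d - k).factorial : ℝ) := by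
  rw [Finset.prod_Ico_eq_prod_range]
  have : ∀ i ∈ range (d - k), (2 * ((k + i : ℕ) : ℝ) - 2 * (d : ℝ))
      = (-1) * (2 * (((d - k) - i : ℕ) : ℝ)) := by
    intro i hi
    simp only [Finset.mem_range] at hi
    have h1 : ((k + i : ℕ) : ℝ) = (k : ℝ) + i := by push_cast; ring
    have h2 : (((d - k) - i : ℕ) : ℝ) = (d : ℝ) - k - i := by
      have : d - k - i + (k + i) = d := by omega
      have := congrArg (fun t : ℕ => (t : ℝ)) this
      push_cast at this
      linarith
    rw [h1, h2]; ring
  rw [Finset.prod_congr rfl this, Finset.prod_mul_distrib, Finset.prod_mul_distrib]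
  rw [Finset.prod_const, Finset.prod_const, ← Nat.cast_prod, prodDescNat]
  simp [Finset.card_range]
  ring

open Polynomial in
/-- the recursion identity for the numbers `r_{k,m}`. -/
theorem statement14 (d m : ℕ) (hd : 1 ≤ d) (n : ℝ)
    (hnm : ∀ j : ℕ, j ≤ 2 * d - 2 → n + 2 * (m : ℝ) - 4 - 2 * (j : ℝ) ≠ 0) :
    ∑ k ∈ Finset.range (d + 1),
      (∏ l ∈ Finset.Ico k d,
        1 / ((2 * (l : ℝ) - 2 * (d : ℝ)) *
          (n - 2 + 2 * (m : ℝ) - 2 * (d : ℝ) - 2 * (l : ℝ)))) *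
      (1 / ((2 : ℝ) ^ k * (Nat.factorial k : ℝ) *
        ∏ l ∈ Finset.range k, (n + 2 * (m : ℝ) - 4 - 2 * (l : ℝ)))) = 0 := by
  set c : ℝ := n + 2 * (m : ℝ) - 4 with hc
  have hne : ∀ j : ℕ, j < 2 * d - 1 → c - 2 * (j : ℝ) ≠ 0 := fun j hj =>
    hnm j (by omega)
  set Pfull : ℝ := ∏ j ∈ range (2 * d - 1), (c - 2 * (j : ℝ)) with hPfull
  have hPfull0 : Pfull ≠ 0 :=
    Finset.prod_ne_zero_iff.mpr fun j hj => hne j (Finset.mem_range.mp hj)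
  set D : ℝ := 2 ^ d * (d.factorial : ℝ) * Pfull with hD
  have hD0 : D ≠ 0 := by
    apply mul_ne_zero (mul_ne_zero (by positivity) (by positivity)) hPfull0
  -- the polynomial
  set q : Polynomial ℝ := ∏ i ∈ range (d - 1), (Polynomial.C (c - 2 * (i : ℝ)) - Polynomial.C 2 * Polynomial.X) with hq
  have hqeval : ∀ x : ℝ, q.eval x = ∏ i ∈ range (d - 1), (c - 2 * (i : ℝ) - 2 * x) := by
    intro x; simp [hq, Polynomial.eval_prod]
  have hqdeg : q.degree < (d : ℕ) := by
    have h1 : q.natDegree ≤ d - 1 := by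
      refine le_trans (Polynomial.natDegree_prod_le _ _) ?_
      refine le_trans (Finset.sum_le_sum fun i _ => ?_) (by simp : ∑ _i ∈ range (d-1), 1 ≤ d - 1)
      refine le_trans (Polynomial.natDegree_sub_le _ _) ?_
      rw [Polynomial.natDegree_C, Polynomial.natDegree_C_mul_X (2:ℝ) two_ne_zero]
      norm_num
    refine lt_of_le_of_lt Polynomial.degree_le_natDegree ?_
    exact_mod_cast lt_of_le_of_lt h1 (by omega : d - 1 < d)
  -- per-term identity
  have key : ∀ k ∈ range (d + 1),
      (∏ l ∈ Finset.Ico k d,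
        1 / ((2 * (l : ℝ) - 2 * (d : ℝ)) *
          (n - 2 + 2 * (m : ℝ) - 2 * (d : ℝ) - 2 * (l : ℝ)))) *
      (1 / ((2 : ℝ) ^ k * (Nat.factorial k : ℝ) *
        ∏ l ∈ Finset.range k, (c - 2 * (l : ℝ))))
      = ((-1 : ℝ) ^ d * ((-1 : ℝ) ^ k * (d.choose k : ℝ) * q.eval (k : ℝ))) / D := by
    intro k hk
    rw [Finset.mem_range] at hk
    have hkd : k ≤ d := by omega
    set R : ℝ := ∏ l ∈ Finset.range k, (c - 2 * (l : ℝ)) with hR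
    set Bk : ℝ := ∏ j ∈ Finset.Ico (d + k - 1) (2 * d - 1), (c - 2 * (j : ℝ)) with hBk
    set Pk : ℝ := ∏ j ∈ Finset.Ico k (d + k - 1), (c - 2 * (j : ℝ)) with hPk
    have hR0 : R ≠ 0 := Finset.prod_ne_zero_iff.mpr fun l hl => by
      rw [Finset.mem_range] at hl; exact hne l (by omega)
    have hBk0 : Bk ≠ 0 := Finset.prod_ne_zero_iff.mpr fun j hj => by
      rw [Finset.mem_Ico] at hj; exact hne j (by omega)
    have hPk0 : Pk ≠ 0 := Finset.prod_ne_zero_iff.mpr fun j hj => by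
      rw [Finset.mem_Ico] at hj; exact hne j (by omega)
    -- second Ico product
    have hsec : ∏ l ∈ Finset.Ico k d, (n - 2 + 2 * (m : ℝ) - 2 * (d : ℝ) - 2 * (l : ℝ)) = Bk := by
      rw [hBk, Finset.prod_Ico_eq_prod_range, Finset.prod_Ico_eq_prod_range]
      rw [show 2 * d - 1 - (d + k - 1) = d - k by omega]
      refine Finset.prod_congr rfl fun i hi => ?_
      rw [Finset.mem_range] at hi
      have e1 : ((d + k - 1 + i : ℕ) : ℝ) = (d : ℝ) + k - 1 + i := by
        have h1 : ((d + k - 1 : ℕ) : ℝ) = (d : ℝ) + k - 1 := by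
          rw [Nat.cast_sub (by omega : 1 ≤ d + k), Nat.cast_add]; norm_num
        rw [Nat.cast_add, h1]
      rw [e1]
      push_cast
      rw [hc]
      ring
    -- Pk = q.eval k
    have hPkq : Pk = q.eval (k : ℝ) := by
      rw [hqeval, hPk, Finset.prod_Ico_eq_prod_range,
        show d + k - 1 - k = d - 1 by omega]
      refine Finset.prod_congr rfl fun i hi => ?_
      push_cast
      ring
    -- full product splits
    have hsplit : Pfull = R * Pk * Bk := by
      rw [hPfull, hR, hPk, hBk, Finset.range_eq_Ico,
        ← Finset.prod_Ico_consecutive _ (by omega : 0 ≤ k) (by omega : k ≤ 2 * d - 1),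
        ← Finset.prod_Ico_consecutive _ (by omega : k ≤ d + k - 1) (by omega : d + k - 1 ≤ 2 * d - 1),
        ← Finset.range_eq_Ico, mul_assoc]
    -- first product
    have hfirst : (∏ l ∈ Finset.Ico k d,
        1 / ((2 * (l : ℝ) - 2 * (d : ℝ)) *
          (n - 2 + 2 * (m : ℝ) - 2 * (d : ℝ) - 2 * (l : ℝ))))
        = 1 / (((-1 : ℝ) ^ (d - k) * 2 ^ (d - k) * ((d - k).factorial : ℝ)) * Bk) := by
      have : ∀ l ∈ Finset.Ico k d,
          1 / ((2 * (l : ℝ) - 2 * (d : ℝ)) *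
            (n - 2 + 2 * (m : ℝ) - 2 * (d : ℝ) - 2 * (l : ℝ)))
          = (1 / (2 * (l : ℝ) - 2 * (d : ℝ))) *
            (1 / (n - 2 + 2 * (m : ℝ) - 2 * (d : ℝ) - 2 * (l : ℝ))) := by
        intro l _; rw [one_div_mul_one_div]
      rw [Finset.prod_congr rfl this, Finset.prod_mul_distrib]
      simp only [Finset.prod_div_distrib, Finset.prod_const_one]
      rw [prodIcoLin k d hkd, hsec, one_div_mul_one_div]
    rw [hfirst, ← hPkq, one_div_mul_one_div]
    have hX0 : ((-1 : ℝ) ^ (d - k) * 2 ^ (d - k) * ((d - k).factorial : ℝ) * Bk) *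
        ((2 : ℝ) ^ k * (k.factorial : ℝ) * R) ≠ 0 := by
      apply mul_ne_zero (mul_ne_zero (mul_ne_zero (mul_ne_zero (pow_ne_zero _ (by norm_num))
        (by positivity)) (by positivity)) hBk0)
      exact mul_ne_zero (mul_ne_zero (by positivity) (by positivity)) hR0
    rw [div_eq_div_iff hX0 hD0, one_mul, hD, hsplit]
    have hsign : (-1 : ℝ) ^ (d - k) * ((-1 : ℝ) ^ d * (-1 : ℝ) ^ k) = 1 := by
      rw [← pow_add, ← pow_add, show d - k + (d + k) = 2 * d by omega, pow_mul]
      norm_num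
    have hpow : (2 : ℝ) ^ (d - k) * 2 ^ k = 2 ^ d := by
      rw [← pow_add, show d - k + k = d by omega]
    have hfact : (d.choose k : ℝ) * (k.factorial : ℝ) * ((d - k).factorial : ℝ)
        = (d.factorial : ℝ) := by
      exact_mod_cast congrArg (fun t : ℕ => (t : ℝ)) (Nat.choose_mul_factorial_mul_factorial hkd)
    calc (2 : ℝ) ^ d * (d.factorial : ℝ) * (R * Pk * Bk)
        = ((-1 : ℝ) ^ (d - k) * ((-1 : ℝ) ^ d * (-1 : ℝ) ^ k)) * ((2 : ℝ) ^ (d - k) * 2 ^ k) *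
            ((d.choose k : ℝ) * (k.factorial : ℝ) * ((d - k).factorial : ℝ)) * (R * Pk * Bk) := by
          rw [hsign, hpow, hfact]; ring
      _ = (-1 : ℝ) ^ d * ((-1 : ℝ) ^ k * (d.choose k : ℝ) * Pk) *
            ((-1 : ℝ) ^ (d - k) * 2 ^ (d - k) * ((d - k).factorial : ℝ) * Bk *
              ((2 : ℝ) ^ k * (k.factorial : ℝ) * R)) := by ring
  rw [Finset.sum_congr rfl key, ← Finset.sum_div]
  rw [show (∑ k ∈ range (d + 1), (-1 : ℝ) ^ d * ((-1 : ℝ) ^ k * (d.choose k : ℝ) * q.eval (k : ℝ)))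
      = (-1 : ℝ) ^ d * ∑ k ∈ range (d + 1), (-1 : ℝ) ^ k * (d.choose k : ℝ) * q.eval (k : ℝ) from
    (Finset.mul_sum _ _ _).symm]
  rw [altsum d q ((by exact_mod_cast hqdeg) : q.degree < (d : ℕ)), mul_zero, zero_div]

end Heat
end
end

section
/- Fix a positive integer n. Define for each integer m ≥ 0 the polynomial p_m(c) := Σ_{k=0}^m (−1)^k c^{2m−2k} / ( (2m−2k)! · k! · 2^k · Π_{l=0}^{k−1}(n+4m−4−2l) ) ∈ ℚ[c]. Then for every m ≥ 0 one has the identity of polynomials Σ_{k=0}^m p_{m−k}(c) / a_{k,m} = c^{2m}/(2m)!, where a_{k,m} := 2^k · k! · Π_{l=1}^{k}(n+4m−2k−2l). -/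
noncomputable section

open MvPolynomial MeasureTheory Finset
open scoped RealInnerProductSpace Manifold

namespace Heat


/-- canonical product `∏_{e∈Ioc a b} (x - 2e)` -/
def Pr (x : ℝ) (a b : ℕ) : ℝ := ∏ e ∈ Finset.Ioc a b, (x - 2 * (e : ℝ))

lemma prod_Ioc_eq_range (f : ℕ → ℝ) (a n : ℕ) :
    ∏ e ∈ Finset.Ioc a (a + n), f e = ∏ l ∈ Finset.range n, f (a + 1 + l) := by
  induction n with
  | zero => simp
  | succ n ih =>
      rw [← add_assoc, Finset.prod_Ioc_succ_top (by omega), ih, Finset.prod_range_succ,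
        show a + 1 + n = a + n + 1 from by omega]

lemma Pr_self (x : ℝ) (a : ℕ) : Pr x a a = 1 := by simp [Pr]

lemma Pr_succ (x : ℝ) (a : ℕ) : Pr x a (a + 1) = x - 2 * ((a : ℝ) + 1) := by
  rw [Pr, prod_Ioc_eq_range (fun e => x - 2 * (e : ℝ)) a 1]
  push_cast [Finset.prod_range_one]
  ring

lemma Pr_split (x : ℝ) {a b c : ℕ} (hab : a ≤ b) (hbc : b ≤ c) :
    Pr x a b * Pr x b c = Pr x a c :=
  Finset.prod_Ioc_consecutive _ hab hbc

lemma Pr_pos (x : ℝ) {a b : ℕ} (h : ∀ e : ℕ, e ≤ b → 0 < x - 2 * (e : ℝ)) : 0 < Pr x a b :=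
  Finset.prod_pos fun e he => h e (Finset.mem_Ioc.mp he).2

lemma pascal_real (x : ℝ) {s k : ℕ} (hk : 1 ≤ k) (hks : k + 1 ≤ s) :
    ((s-1).choose k : ℝ) * (x - 2*((k:ℝ)+1)) + ((s-1).choose (k-1) : ℝ) * (x - 2*((s:ℝ)+(k:ℝ)+1))
      = (s.choose k : ℝ) * (x - 2*(2*(k:ℝ)+1)) := by
  obtain ⟨K, rfl⟩ : ∃ K, k = K + 1 := ⟨k - 1, by omega⟩
  obtain ⟨S, rfl⟩ : ∃ S, s = S + 1 := ⟨s - 1, by omega⟩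
  simp only [Nat.add_sub_cancel]
  have h1 : ((S+1).choose (K+1) : ℝ) = S.choose K + S.choose (K+1) := by
    rw [Nat.choose_succ_succ]; push_cast; ring
  have h2 : ((S:ℝ)+1) * (S.choose K) = ((S+1).choose (K+1) : ℝ) * ((K:ℝ)+1) := by
    have h := Nat.add_one_mul_choose_eq S K
    have h' := congrArg (fun t : ℕ => (t : ℝ)) h
    push_cast at h' ⊢
    linarith [h']
  push_cast
  linear_combination (x - 2*((K:ℝ)+1+1)) * h1.symm - 2 * h2

lemma key_telescope (x : ℝ) (s : ℕ) (hs : 1 ≤ s)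
    (hx : ∀ e : ℕ, e ≤ 2*s → 0 < x - 2 * (e : ℝ)) :
    ∑ k ∈ Finset.range (s+1),
      ((-1 : ℝ))^(s-k) /
        ((k.factorial : ℝ) * ((s-k).factorial : ℝ) * Pr x k (2*k) * Pr x (2*k+1) (s+k+1)) = 0 := by
  set w : ℕ → ℝ := fun k =>
    if 1 ≤ k ∧ k ≤ s then
      (-1 : ℝ)^(s-k+1) * ((s-1).choose (k-1) : ℝ) / ((s.factorial : ℝ) * Pr x k (s+k))
    else 0 with hw
  have step : ∀ k ∈ Finset.range (s+1),
      ((-1 : ℝ))^(s-k) /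
        ((k.factorial : ℝ) * ((s-k).factorial : ℝ) * Pr x k (2*k) * Pr x (2*k+1) (s+k+1))
        = w (k+1) - w k := by
    intro k hk
    rw [Finset.mem_range] at hk
    have hks : k ≤ s := by omega
    rcases Nat.eq_zero_or_pos k with hk0 | hk1
    · -- k = 0
      subst hk0
      have hw0 : w 0 = 0 := by
        simp only [hw]; rw [if_neg (by omega)]
      have hw1 : w 1 = (-1 : ℝ)^s / ((s.factorial : ℝ) * Pr x 1 (s+1)) := by
        simp only [hw]
        rw [if_pos (show 1 ≤ 1 ∧ 1 ≤ s from ⟨le_rfl, hs⟩),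
          show s - 1 + 1 = s from by omega]
        norm_num
      rw [hw0, hw1, show (2*0 : ℕ) = 0 from rfl, Pr_self,
        show (2*0+1 : ℕ) = 1 from rfl, show s + 0 + 1 = s + 1 from by omega,
        Nat.sub_zero]
      norm_num
    rcases eq_or_lt_of_le hks with hke | hklt
    · -- k = s
      have hw1 : w (k+1) = 0 := by
        simp only [hw]; rw [if_neg (by omega)]
      have hws : w k = -((1:ℝ) / ((s.factorial : ℝ) * Pr x k (2*k))) := by
        simp only [hw]
        rw [if_pos ⟨hk1, hks⟩, show s - k + 1 = 1 from by omega,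
          show k - 1 = s - 1 from by omega, Nat.choose_self,
          show s + k = 2*k from by omega]
        norm_num
        ring
      rw [hw1, hws, show s - k = 0 from by omega,
        show s + k + 1 = 2*k + 1 from by omega, Pr_self,
        show (k.factorial : ℝ) = (s.factorial : ℝ) from by rw [hke]]
      norm_num
    -- middle: 1 ≤ k, k + 1 ≤ s
    have hks1 : k + 1 ≤ s := hklt
    have hwk1 : w (k+1) = (-1 : ℝ)^(s-k) * ((s-1).choose k : ℝ) /
        ((s.factorial : ℝ) * Pr x (k+1) (s+(k+1))) := by
      simp only [hw]
      rw [if_pos (show 1 ≤ k+1 ∧ k+1 ≤ s from ⟨by omega, by omega⟩),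
        show s - (k+1) + 1 = s - k from by omega, Nat.add_sub_cancel]
    have hwk : w k = -((-1 : ℝ)^(s-k) * ((s-1).choose (k-1) : ℝ) /
        ((s.factorial : ℝ) * Pr x k (s+k))) := by
      simp only [hw]
      rw [if_pos ⟨hk1, hks⟩, pow_succ]
      ring
    -- positivity / nonzero facts
    have hQ : (0:ℝ) < Pr x (k+1) (s+k) := Pr_pos x (fun e he => hx e (by omega))
    have hP1 : (0:ℝ) < Pr x k (2*k) := Pr_pos x (fun e he => hx e (by omega))
    have hP2 : (0:ℝ) < Pr x (2*k+1) (s+k+1) := Pr_pos x (fun e he => hx e (by omega))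
    have hg1 : (0:ℝ) < x - 2*((k:ℝ)+1) := by
      have h := hx (k+1) (by omega); push_cast at h; linarith
    have hg2 : (0:ℝ) < x - 2*((s:ℝ)+(k:ℝ)+1) := by
      have h := hx (s+k+1) (by omega); push_cast at h; linarith
    have hg3 : (0:ℝ) < x - 2*(2*(k:ℝ)+1) := by
      have h := hx (2*k+1) (by omega); push_cast at h; linarith
    have hS : ((s.factorial : ℝ)) ≠ 0 := Nat.cast_ne_zero.mpr s.factorial_ne_zero
    have ha1 : ((k.factorial : ℝ)) ≠ 0 := Nat.cast_ne_zero.mpr k.factorial_ne_zero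
    have ha2 : (((s-k).factorial : ℝ)) ≠ 0 := Nat.cast_ne_zero.mpr (s-k).factorial_ne_zero
    have hch : ((s.choose k : ℝ)) ≠ 0 := by
      exact_mod_cast (Nat.choose_pos hks).ne'
    -- product relations
    have hPrA : Pr x (k+1) (s+(k+1)) = Pr x (k+1) (s+k) * (x - 2*((s:ℝ)+(k:ℝ)+1)) := by
      rw [show s + (k+1) = (s+k) + 1 from by omega,
        ← Pr_split x (show k+1 ≤ s+k by omega) (Nat.le_succ _), Pr_succ]
      push_cast; ring
    have hPrB : Pr x k (s+k) = (x - 2*((k:ℝ)+1)) * Pr x (k+1) (s+k) := by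
      rw [← Pr_split x (Nat.le_succ k) (show k+1 ≤ s+k by omega), Pr_succ]
    have hF3 : (x - 2*(2*(k:ℝ)+1)) * (Pr x k (2*k) * Pr x (2*k+1) (s+k+1))
        = (x - 2*((k:ℝ)+1)) * Pr x (k+1) (s+k) * (x - 2*((s:ℝ)+(k:ℝ)+1)) := by
      have A1 : Pr x (2*k+1) (s+k) * Pr x (s+k) (s+k+1) = Pr x (2*k+1) (s+k+1) :=
        Pr_split x (by omega) (by omega)
      have A2 : Pr x (2*k) (2*k+1) * Pr x (2*k+1) (s+k) = Pr x (2*k) (s+k) :=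
        Pr_split x (by omega) (by omega)
      have A3 : Pr x k (2*k) * Pr x (2*k) (s+k) = Pr x k (s+k) :=
        Pr_split x (by omega) (by omega)
      have e1 : Pr x (2*k) (2*k+1) = x - 2*(2*(k:ℝ)+1) := by
        rw [Pr_succ]; push_cast; ring
      have e2 : Pr x (s+k) (s+k+1) = x - 2*((s:ℝ)+(k:ℝ)+1) := by
        rw [Pr_succ]; push_cast; ring
      calc (x - 2*(2*(k:ℝ)+1)) * (Pr x k (2*k) * Pr x (2*k+1) (s+k+1))
          = Pr x k (2*k) * ((Pr x (2*k) (2*k+1) * Pr x (2*k+1) (s+k)) * Pr x (s+k) (s+k+1)) := by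
            rw [← A1, ← e1]; ring
        _ = Pr x k (s+k) * Pr x (s+k) (s+k+1) := by rw [A2, ← A3]; ring
        _ = (x - 2*((k:ℝ)+1)) * Pr x (k+1) (s+k) * (x - 2*((s:ℝ)+(k:ℝ)+1)) := by
            rw [hPrB, e2]
    have hfacid : ((s.factorial : ℝ)) =
        (s.choose k : ℝ) * (k.factorial : ℝ) * ((s-k).factorial : ℝ) := by
      rw [← Nat.choose_mul_factorial_mul_factorial hks]
      push_cast; ring
    have hpas := pascal_real x hk1 hks1
    have key2 : (1:ℝ) / ((k.factorial : ℝ) * ((s-k).factorial : ℝ) *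
          Pr x k (2*k) * Pr x (2*k+1) (s+k+1))
        = ((s-1).choose k : ℝ) / ((s.factorial : ℝ) * Pr x (k+1) (s+(k+1)))
          + ((s-1).choose (k-1) : ℝ) / ((s.factorial : ℝ) * Pr x k (s+k)) := by
      rw [hPrA, hPrB]
      have h4 : ((s-1).choose k : ℝ) /
            ((s.factorial : ℝ) * (Pr x (k+1) (s+k) * (x - 2*((s:ℝ)+(k:ℝ)+1))))
          + ((s-1).choose (k-1) : ℝ) /
            ((s.factorial : ℝ) * ((x - 2*((k:ℝ)+1)) * Pr x (k+1) (s+k)))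
          = (((s-1).choose k : ℝ) * (x - 2*((k:ℝ)+1))
              + ((s-1).choose (k-1) : ℝ) * (x - 2*((s:ℝ)+(k:ℝ)+1)))
            / ((s.factorial : ℝ) * ((x - 2*((k:ℝ)+1)) * Pr x (k+1) (s+k) * (x - 2*((s:ℝ)+(k:ℝ)+1)))) := by
        rw [div_add_div _ _ (by positivity) (by positivity)]
        rw [div_eq_div_iff (by positivity) (by positivity)]
        ring
      rw [h4, hpas, ← hF3, hfacid]
      rw [div_eq_div_iff (by positivity) (by positivity)]
      ring
    rw [hwk1, hwk]
    linear_combination ((-1:ℝ)^(s-k)) * key2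
  rw [Finset.sum_congr rfl step, Finset.sum_range_sub w (s+1)]
  have hw0 : w 0 = 0 := by simp only [hw]; rw [if_neg (by omega)]
  have hwtop : w (s+1) = 0 := by simp only [hw]; rw [if_neg (by omega)]
  rw [hw0, hwtop, sub_zero]

lemma tri_swap (N : ℕ) (f : ℕ → ℕ → ℝ) :
    ∑ k ∈ Finset.range (N+1), ∑ j ∈ Finset.range (N-k+1), f k j
      = ∑ s ∈ Finset.range (N+1), ∑ k ∈ Finset.range (s+1), f k (s-k) := by
  rw [Finset.sum_sigma', Finset.sum_sigma']
  apply Finset.sum_nbij' (i := fun p : Σ _ : ℕ, ℕ => (⟨p.1 + p.2, p.1⟩ : Σ _ : ℕ, ℕ))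
    (j := fun p : Σ _ : ℕ, ℕ => (⟨p.2, p.1 - p.2⟩ : Σ _ : ℕ, ℕ))
  · intro p hp; simp only [Finset.mem_sigma, Finset.mem_range] at *; omega
  · intro p hp; simp only [Finset.mem_sigma, Finset.mem_range] at *; omega
  · intro p hp; simp only [Finset.mem_sigma, Finset.mem_range] at *
    ext <;> simp <;> omega
  · intro p hp; simp only [Finset.mem_sigma, Finset.mem_range] at *
    ext <;> simp <;> omega
  · intro p hp; simp only [Finset.mem_sigma, Finset.mem_range] at *
    congr 1; omega


/-- `∑_{k=0}^m p_{m-k}/a_{k,m} = c^{2m}/(2m)!`. -/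
theorem statement15 (n : ℕ) (hn : 0 < n) (m : ℕ) (c : ℝ) :
    ∑ k ∈ Finset.range (m + 1),
      pmVal n (m - k) c /
        ((2 : ℝ) ^ k * (Nat.factorial k : ℝ) *
          ∏ l ∈ Finset.Icc 1 k, ((n : ℝ) + 4 * (m : ℝ) - 2 * (k : ℝ) - 2 * (l : ℝ))) =
    c ^ (2 * m) / (Nat.factorial (2 * m) : ℝ) := by
  have hxpos : ∀ e : ℕ, e ≤ 2*m → (0:ℝ) < ((n:ℝ) + 4*(m:ℝ)) - 2*(e:ℝ) := by
    intro e he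
    have h1 : (1:ℝ) ≤ (n:ℝ) := by exact_mod_cast hn
    have h2 : (e:ℝ) ≤ 2*(m:ℝ) := by exact_mod_cast he
    linarith
  simp only [pmVal, Finset.sum_div]
  rw [tri_swap m (fun k j =>
    (-1 : ℝ) ^ j * c ^ (2 * (m - k) - 2 * j) /
      ((Nat.factorial (2 * (m - k) - 2 * j) : ℝ) * (Nat.factorial j : ℝ) * 2 ^ j *
        ∏ l ∈ Finset.range j, ((n : ℝ) + 4 * ((m - k : ℕ) : ℝ) - 4 - 2 * l)) /
      ((2 : ℝ) ^ k * (Nat.factorial k : ℝ) *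
        ∏ l ∈ Finset.Icc 1 k, ((n : ℝ) + 4 * (m : ℝ) - 2 * (k : ℝ) - 2 * (l : ℝ))))]
  have inner_eval : ∀ s ∈ Finset.range (m+1),
      (∑ k ∈ Finset.range (s+1),
        (-1 : ℝ) ^ (s-k) * c ^ (2 * (m - k) - 2 * (s-k)) /
          ((Nat.factorial (2 * (m - k) - 2 * (s-k)) : ℝ) * (Nat.factorial (s-k) : ℝ) * 2 ^ (s-k) *
            ∏ l ∈ Finset.range (s-k), ((n : ℝ) + 4 * ((m - k : ℕ) : ℝ) - 4 - 2 * l)) /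
          ((2 : ℝ) ^ k * (Nat.factorial k : ℝ) *
            ∏ l ∈ Finset.Icc 1 k, ((n : ℝ) + 4 * (m : ℝ) - 2 * (k : ℝ) - 2 * (l : ℝ))))
      = if s = 0 then c ^ (2*m) / (Nat.factorial (2*m) : ℝ) else 0 := by
    intro s hsr
    rw [Finset.mem_range] at hsr
    have hsm : s ≤ m := by omega
    rcases Nat.eq_zero_or_pos s with hs0 | hs1
    · subst hs0
      rw [if_pos rfl, Finset.sum_range_one]
      norm_num
    rw [if_neg (by omega)]
    have hterm : ∀ k ∈ Finset.range (s+1),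
        (-1 : ℝ) ^ (s-k) * c ^ (2 * (m - k) - 2 * (s-k)) /
          ((Nat.factorial (2 * (m - k) - 2 * (s-k)) : ℝ) * (Nat.factorial (s-k) : ℝ) * 2 ^ (s-k) *
            ∏ l ∈ Finset.range (s-k), ((n : ℝ) + 4 * ((m - k : ℕ) : ℝ) - 4 - 2 * l)) /
          ((2 : ℝ) ^ k * (Nat.factorial k : ℝ) *
            ∏ l ∈ Finset.Icc 1 k, ((n : ℝ) + 4 * (m : ℝ) - 2 * (k : ℝ) - 2 * (l : ℝ)))
        = (c ^ (2*(m-s)) / ((Nat.factorial (2*(m-s)) : ℝ) * 2^s)) *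
            ((-1 : ℝ)^(s-k) /
              ((k.factorial : ℝ) * ((s-k).factorial : ℝ) *
                Pr ((n:ℝ) + 4*(m:ℝ)) k (2*k) * Pr ((n:ℝ) + 4*(m:ℝ)) (2*k+1) (s+k+1))) := by
      intro k hkr
      rw [Finset.mem_range] at hkr
      have hks : k ≤ s := by omega
      have hkm : k ≤ m := by omega
      have hE : 2 * (m - k) - 2 * (s - k) = 2 * (m - s) := by omega
      have hA : (∏ l ∈ Finset.range (s-k), ((n : ℝ) + 4 * ((m - k : ℕ) : ℝ) - 4 - 2 * l))
          = Pr ((n:ℝ) + 4*(m:ℝ)) (2*k+1) (s+k+1) := by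
        rw [Pr, show s + k + 1 = (2*k+1) + (s-k) from by omega,
          prod_Ioc_eq_range (fun e => ((n:ℝ) + 4*(m:ℝ)) - 2 * (e : ℝ)) (2*k+1) (s-k)]
        apply Finset.prod_congr rfl
        intro l _
        have : ((m - k : ℕ) : ℝ) = (m:ℝ) - (k:ℝ) := Nat.cast_sub hkm
        rw [this]
        push_cast
        ring
      have hB : (∏ l ∈ Finset.Icc 1 k, ((n : ℝ) + 4 * (m : ℝ) - 2 * (k : ℝ) - 2 * (l : ℝ)))
          = Pr ((n:ℝ) + 4*(m:ℝ)) k (2*k) := by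
        rw [Pr, show (2*k) = k + k from by omega,
          prod_Ioc_eq_range (fun e => ((n:ℝ) + 4*(m:ℝ)) - 2 * (e : ℝ)) k k,
          show Finset.Icc 1 k = Finset.Ioc 0 (0 + k) from by
            rw [← Finset.Icc_add_one_left_eq_Ioc]; norm_num,
          prod_Ioc_eq_range (fun l => ((n:ℝ) + 4*(m:ℝ) - 2 * (k:ℝ) - 2 * (l : ℝ))) 0 k]
        apply Finset.prod_congr rfl
        intro l _
        push_cast
        ring
      rw [hE, hA, hB]
      have h2s : (2:ℝ)^(s-k) * 2^k = 2^s := by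
        rw [← pow_add]; congr 1; omega
      rw [show (2:ℝ)^s = 2^(s-k) * 2^k from h2s.symm]
      ring
    rw [Finset.sum_congr rfl hterm, ← Finset.mul_sum,
      key_telescope ((n:ℝ) + 4*(m:ℝ)) s hs1 (fun e he => hxpos e (by omega)), mul_zero]
  rw [Finset.sum_congr rfl inner_eval]
  simp


end Heat
end
end
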